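/- arXiv:2310.18869 — 3 statements merged into one kernel-verified Lean document; each statement's English description precedes it below -/
import Mathlib

section
/- Let p be a prime and r ≥ 1 an integer, and regard M(p^r) as a matrix over ℚ. Then M(p^r) is invertible and the (i,j) entry of M(p^r)⁻¹ equals −p^{1−2r} − ((p−1)/(p+1))·r·p^{1−2r} if i = j, and equals −p^{1−2r} − (p^{2−3r}/(p+1))·(−p^{r−1} + ν_p(i−j)·p^{r−1}·(p−1)) if i ≠ j. -/
/-- `M(p^r)`: the `p^r × p^r` matrix over `ℚ` whose `(i,j)` entry is `−p^{2r−1}` if `i = j`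
and `p^{2ν_p(i−j)}` otherwise, where `ν_p` is the `p`-adic valuation. -/
def Mpr (p r : ℕ) : Matrix (Fin (p ^ r)) (Fin (p ^ r)) ℚ := fun i j =>
  if i = j then -(p : ℚ) ^ (2 * r - 1)
  else (p : ℚ) ^ (2 * padicValInt p ((i : ℤ) - (j : ℤ)))

open Finset


/-- coefficients for decomposing `M` -/
def Cc (q : ℚ) (r v : ℕ) : ℚ :=
  if v = 0 then 1 else if v = r then -(q+1)*q^(2*(r-1)) else (q^2-1)*q^(2*(v-1))

/-- (scaled) coefficients for decomposing `N` -/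
def Dd (q : ℚ) (r w : ℕ) : ℚ := if w = 0 ∨ w = r then -q else -(q-1)

lemma sumC (q : ℚ) (r : ℕ) : ∀ u, u < r → ∑ v ∈ range (u+1), Cc q r v = q^(2*u) := by
  intro u
  induction u with
  | zero => intro _; simp [Cc]
  | succ u ih =>
    intro hu
    rw [Finset.sum_range_succ, ih (by omega)]
    have h1 : Cc q r (u+1) = (q^2-1)*q^(2*u) := by
      have : 2*(u+1-1) = 2*u := by omega
      simp only [Cc, if_neg (by omega : ¬ u+1 = 0), if_neg (by omega : ¬ u+1 = r), this]
    rw [h1]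
    have : 2*(u+1) = 2*u + 2 := by omega
    rw [this]; ring

lemma sumCfull (q : ℚ) (r : ℕ) (hr : 1 ≤ r) :
    ∑ v ∈ range (r+1), Cc q r v = -q^(2*r-1) := by
  rw [Finset.sum_range_succ]
  have h0 : r - 1 + 1 = r := by omega
  have h1 : ∑ v ∈ range r, Cc q r v = q^(2*(r-1)) := by
    have := sumC q r (r-1) (by omega)
    rwa [h0] at this
  have h2 : Cc q r r = -(q+1)*q^(2*(r-1)) := by
    rw [Cc, if_neg (by omega : ¬ r = 0), if_pos rfl]
  have h3 : 2*r-1 = 2*(r-1)+1 := by omega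
  rw [h1, h2, h3]; ring

lemma sumD (q : ℚ) (r : ℕ) : ∀ u, u < r →
    ∑ w ∈ range (u+1), Dd q r w = -q - u*(q-1) := by
  intro u
  induction u with
  | zero => intro _; simp [Dd]
  | succ u ih =>
    intro hu
    rw [Finset.sum_range_succ, ih (by omega)]
    have h1 : Dd q r (u+1) = -(q-1) := by
      simp only [Dd, if_neg (by omega : ¬ (u+1 = 0 ∨ u+1 = r))]
    rw [h1]; push_cast; ring

lemma sumDfull (q : ℚ) (r : ℕ) (hr : 1 ≤ r) :
    ∑ w ∈ range (r+1), Dd q r w = -2*q - ((r:ℚ)-1)*(q-1) := by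
  rw [Finset.sum_range_succ]
  have h0 : r - 1 + 1 = r := by omega
  have h1 : ∑ w ∈ range r, Dd q r w = -q - (↑(r-1))*(q-1) := by
    have := sumD q r (r-1) (by omega)
    rwa [h0] at this
  have h2 : Dd q r r = -q := by simp [Dd]
  rw [h1, h2, Nat.cast_sub hr]; push_cast; ring

lemma Icc_insert (m r : ℕ) (h : m ≤ r) :
    Finset.Icc m r = insert m (Finset.Icc (m+1) r) := by
  ext x; simp only [Finset.mem_Icc, Finset.mem_insert]; omega

lemma SDlem (q : ℚ) (r : ℕ) (hr : 1 ≤ r) : ∀ k, k ≤ r-1 →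
    ∑ w ∈ Finset.Icc (r-k) r, Dd q r w * q^(r-w) = -q^(k+1) := by
  intro k
  induction k with
  | zero =>
    intro _
    rw [Nat.sub_zero, Finset.Icc_self, Finset.sum_singleton, Nat.sub_self]
    have h2 : Dd q r r = -q := by simp [Dd]
    rw [h2]; ring
  | succ k ih =>
    intro hk
    have hm : r - (k+1) ≤ r := by omega
    rw [Icc_insert _ _ hm, Finset.sum_insert (by simp),
      (by omega : r - (k+1) + 1 = r - k), ih (by omega)]
    have h1 : Dd q r (r-(k+1)) = -(q-1) := by
      rw [Dd, if_neg (by omega)]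
    have h2 : r - (r - (k+1)) = k+1 := by omega
    rw [h1, h2]; ring

lemma SClem (q : ℚ) (r : ℕ) (hr : 1 ≤ r) : ∀ k, k ≤ r-1 →
    ∑ v ∈ Finset.Icc (r-k) r, Cc q r v * q^(r-v) = -(q+1)*q^(2*r-2-k) := by
  intro k
  induction k with
  | zero =>
    intro _
    rw [Nat.sub_zero, Finset.Icc_self, Finset.sum_singleton, Nat.sub_self]
    have h2 : Cc q r r = -(q+1)*q^(2*(r-1)) := by
      rw [Cc, if_neg (by omega : ¬ r = 0), if_pos rfl]
    rw [h2, (by omega : 2*r-2-0 = 2*(r-1))]; ring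
  | succ k ih =>
    intro hk
    have hm : r - (k+1) ≤ r := by omega
    rw [Icc_insert _ _ hm, Finset.sum_insert (by simp),
      (by omega : r - (k+1) + 1 = r - k), ih (by omega)]
    have h1 : Cc q r (r-(k+1)) = (q^2-1)*q^(2*(r-(k+1)-1)) := by
      rw [Cc, if_neg (by omega), if_neg (by omega)]
    rw [h1, (by omega : r - (r-(k+1)) = k+1)]
    obtain ⟨t, rfl⟩ : ∃ t, r = k+2+t := ⟨r-(k+2), by omega⟩
    rw [(by omega : k+2+t-(k+1)-1 = t), (by omega : 2*(k+2+t)-2-k = k+2*t+2),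
      (by omega : 2*(k+2+t)-2-(k+1) = k+2*t+1)]
    ring

/-- Coefficient of the indicator `[min v w = m]` in the double sum. -/
def Gg (q : ℚ) (r m : ℕ) : ℚ :=
  Cc q r m * (∑ w ∈ Finset.Icc m r, Dd q r w * q^(r-w)) +
    Dd q r m * (∑ v ∈ Finset.Icc (m+1) r, Cc q r v * q^(r-v))

lemma SD_eval (q : ℚ) (r m : ℕ) (hm : 1 ≤ m) (hmr : m ≤ r) :
    ∑ w ∈ Finset.Icc m r, Dd q r w * q^(r-w) = -q^(r-m+1) := by
  have := SDlem q r (by omega) (r-m) (by omega)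
  rwa [(by omega : r - (r-m) = m), (by omega : r-m+1 = r-m+1)] at this

lemma SC_eval (q : ℚ) (r m : ℕ) (hmr : m < r) :
    ∑ v ∈ Finset.Icc (m+1) r, Cc q r v * q^(r-v) = -(q+1)*q^(r+m-1) := by
  have := SClem q r (by omega) (r-m-1) (by omega)
  rwa [(by omega : r - (r-m-1) = m+1), (by omega : 2*r-2-(r-m-1) = r+m-1)] at this

lemma Gg_zero (q : ℚ) (r : ℕ) (hr : 1 ≤ r) (m : ℕ) (hm : m < r) : Gg q r m = 0 := by
  rcases Nat.eq_zero_or_pos m with rfl | hm1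
  · rw [Gg, (by rw [Cc]; simp : Cc q r 0 = 1),
      (by rw [Dd]; simp : Dd q r 0 = -q),
      Icc_insert 0 r (by omega), Finset.sum_insert (by simp),
      (by norm_num : (0:ℕ)+1 = 1), SD_eval q r 1 le_rfl (by omega),
      SC_eval q r 0 (by omega),
      (by rw [Dd]; simp : Dd q r 0 = -q), Nat.sub_zero]
    obtain ⟨t, rfl⟩ : ∃ t, r = 1+t := ⟨r-1, by omega⟩
    rw [(by omega : 1+t-1+1 = 1+t), (by omega : 1+t+0-1 = t)]
    ring
  · rw [Gg, SD_eval q r m hm1 (by omega), SC_eval q r m hm,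
      (by rw [Cc, if_neg (by omega), if_neg (by omega)] :
        Cc q r m = (q^2-1)*q^(2*(m-1))),
      (by rw [Dd, if_neg (by omega)] : Dd q r m = -(q-1))]
    obtain ⟨a, rfl⟩ : ∃ a, m = a+1 := ⟨m-1, by omega⟩
    obtain ⟨b, rfl⟩ : ∃ b, r = a+b+2 := ⟨r-(a+2), by omega⟩
    rw [(by omega : a+1-1 = a), (by omega : a+b+2-(a+1)+1 = b+2),
      (by omega : a+b+2+(a+1)-1 = 2*a+b+2)]
    ring

lemma Gg_r (q : ℚ) (r : ℕ) (hr : 1 ≤ r) : Gg q r r = q^(2*r-1)*(q+1) := by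
  rw [Gg, Finset.Icc_self, Finset.sum_singleton, Nat.sub_self,
    (by simp : Finset.Icc (r+1) r = ∅), Finset.sum_empty,
    (by rw [Dd]; simp : Dd q r r = -q),
    (by rw [Cc, if_neg (by omega : ¬ r = 0), if_pos rfl] :
      Cc q r r = -(q+1)*q^(2*(r-1)))]
  obtain ⟨t, rfl⟩ : ∃ t, r = 1+t := ⟨r-1, by omega⟩
  rw [(by omega : 1+t-1 = t), (by omega : 2*(1+t)-1 = 2*t+1)]
  ring

lemma keyInner (q : ℚ) (r m : ℕ) (hm : m ≤ r) :
    ∑ v ∈ range (r+1), ∑ w ∈ range (r+1),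
      Cc q r v * Dd q r w * q^(r - max v w) * (if min v w = m then 1 else 0)
      = Gg q r m := by
  have split : ∀ v w : ℕ,
      Cc q r v * Dd q r w * q^(r - max v w) * (if min v w = m then 1 else 0)
      = (if v = m then (if m ≤ w then Cc q r v * Dd q r w * q^(r - max v w) else 0) else 0)
      + (if w = m then (if m + 1 ≤ v then Cc q r v * Dd q r w * q^(r - max v w) else 0) else 0) := by
    intro v w
    rcases Nat.le_total v w with hvw | hvw
    · rw [min_eq_left hvw]; split_ifs <;> (first | ring1 | (exfalso; omega))
    · rw [min_eq_right hvw]; split_ifs <;> (first | ring1 | (exfalso; omega))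
  simp_rw [split, Finset.sum_add_distrib]
  rw [Gg]
  congr 1
  · have h1 : ∀ v ∈ range (r+1),
        (∑ w ∈ range (r+1), if v = m then
          (if m ≤ w then Cc q r v * Dd q r w * q^(r-max v w) else 0) else 0)
        = if v = m then (∑ w ∈ range (r+1),
            if m ≤ w then Cc q r v * Dd q r w * q^(r-max v w) else 0) else 0 := by
      intro v _
      split_ifs with h
      · rfl
      · exact Finset.sum_const_zero
    rw [Finset.sum_congr rfl h1, Finset.sum_ite_eq' (range (r+1)) m,
      if_pos (by simp only [Finset.mem_range]; omega), ← Finset.sum_filter,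
      (by ext x; simp only [Finset.mem_filter, Finset.mem_range, Finset.mem_Icc]; omega :
        (range (r+1)).filter (fun w => m ≤ w) = Finset.Icc m r),
      Finset.mul_sum]
    apply Finset.sum_congr rfl
    intro w hw
    rw [max_eq_right (Finset.mem_Icc.mp hw).1]; ring
  · have h1 : ∀ v ∈ range (r+1),
        (∑ w ∈ range (r+1), if w = m then
          (if m + 1 ≤ v then Cc q r v * Dd q r w * q^(r-max v w) else 0) else 0)
        = if m + 1 ≤ v then Cc q r v * Dd q r m * q^(r-max v m) else 0 := by
      intro v _
      rw [Finset.sum_ite_eq' (range (r+1)) m, if_pos (by simp only [Finset.mem_range]; omega)]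
    rw [Finset.sum_congr rfl h1, ← Finset.sum_filter,
      (by ext x; simp only [Finset.mem_filter, Finset.mem_range, Finset.mem_Icc]; omega :
        (range (r+1)).filter (fun v => m + 1 ≤ v) = Finset.Icc (m+1) r),
      Finset.mul_sum]
    apply Finset.sum_congr rfl
    intro v hv
    rw [max_eq_left (by have := (Finset.mem_Icc.mp hv).1; omega)]; ring

lemma keyF (q : ℚ) (r : ℕ) (hr : 1 ≤ r) (u : ℕ) (hu : u ≤ r) :
    ∑ v ∈ range (r+1), ∑ w ∈ range (r+1),
      Cc q r v * Dd q r w * q^(r - max v w) * (if min v w ≤ u then 1 else 0)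
      = if u = r then q^(2*r-1)*(q+1) else 0 := by
  have hind : ∀ v w : ℕ, ((if min v w ≤ u then (1:ℚ) else 0))
      = ∑ m ∈ range (u+1), (if min v w = m then 1 else 0) := by
    intro v w
    rw [Finset.sum_ite_eq (range (u+1)) (min v w) (fun _ => (1:ℚ))]
    simp only [Finset.mem_range, Nat.lt_succ_iff]
  simp_rw [hind, Finset.mul_sum]
  have step1 : ∀ v ∈ range (r+1),
      (∑ w ∈ range (r+1), ∑ m ∈ range (u+1),
        Cc q r v * Dd q r w * q^(r - max v w) * (if min v w = m then 1 else 0))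
      = ∑ m ∈ range (u+1), ∑ w ∈ range (r+1),
        Cc q r v * Dd q r w * q^(r - max v w) * (if min v w = m then 1 else 0) :=
    fun v _ => Finset.sum_comm
  rw [Finset.sum_congr rfl step1, Finset.sum_comm]
  have step2 : ∀ m ∈ range (u+1),
      (∑ v ∈ range (r+1), ∑ w ∈ range (r+1),
        Cc q r v * Dd q r w * q^(r - max v w) * (if min v w = m then 1 else 0))
      = Gg q r m := by
    intro m hm
    exact keyInner q r m (by simp only [Finset.mem_range] at hm; omega)
  rw [Finset.sum_congr rfl step2]
  rcases eq_or_lt_of_le hu with rfl | hlt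
  · rw [if_pos rfl, Finset.sum_range_succ,
      Finset.sum_eq_zero (fun m hm => Gg_zero q u hr m (by simp only [Finset.mem_range] at hm; omega)),
      Gg_r q u hr, zero_add]
  · rw [if_neg (by omega)]
    exact Finset.sum_eq_zero (fun m hm => Gg_zero q r hr m (by simp only [Finset.mem_range] at hm; omega))

lemma card_filter_modeq (p r w : ℕ) (hp : 0 < p) (hw : w ≤ r) (k : Fin (p^r)) :
    ((Finset.univ : Finset (Fin (p^r))).filter
      (fun j : Fin (p^r) => ((p:ℤ))^w ∣ ((j:ℕ):ℤ) - ((k:ℕ):ℤ))).card = p^(r-w) := by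
  have hpw : 0 < p^w := pow_pos hp w
  have hcond : ∀ j : Fin (p^r), ((p:ℤ)^w ∣ (j:ℤ) - (k:ℤ)) ↔ (j:ℕ) % p^w = (k:ℕ) % p^w := by
    intro j
    rw [show ((p:ℤ))^w = ((p^w : ℕ) : ℤ) by push_cast; ring, ← Nat.modEq_iff_dvd]
    exact ⟨fun h => h.symm, fun h => h.symm⟩
  have hcard : ∀ x : Fin (p^(r-w)), (k:ℕ) % p^w + p^w * (x:ℕ) < p^r := by
    intro x
    calc (k:ℕ) % p^w + p^w * (x:ℕ) < p^w + p^w * (x:ℕ) := by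
          exact Nat.add_lt_add_right (Nat.mod_lt _ hpw) _
      _ = p^w * ((x:ℕ) + 1) := by ring
      _ ≤ p^w * p^(r-w) := Nat.mul_le_mul_left _ (Nat.succ_le_of_lt x.isLt)
      _ = p^r := by rw [← pow_add]; congr 1; omega
  have hdiv : ∀ j : Fin (p^r), (j:ℕ) / p^w < p^(r-w) := by
    intro j
    rw [Nat.div_lt_iff_lt_mul hpw]
    calc (j:ℕ) < p^r := j.isLt
      _ = p^(r-w) * p^w := by rw [← pow_add]; congr 1; omega
  rw [← Fintype.card_fin (p^(r-w)), ← Finset.card_univ]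
  apply Finset.card_nbij'
    (fun (j : Fin (p^r)) => (⟨(j:ℕ) / p^w, hdiv j⟩ : Fin (p^(r-w))))
    (fun (x : Fin (p^(r-w))) => (⟨(k:ℕ) % p^w + p^w * (x:ℕ), hcard x⟩ : Fin (p^r)))
  · intro j _
    exact Finset.mem_univ _
  · intro x _
    simp only [Finset.mem_filter, Finset.mem_univ, true_and, hcond]
    simp [Nat.add_mul_mod_self_left, Nat.mod_mod_of_dvd]
  · intro j hj
    simp only [Finset.mem_coe, Finset.mem_filter, Finset.mem_univ, true_and, hcond] at hj
    apply Fin.ext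
    simp only
    rw [← hj, Nat.mod_add_div]
  · intro x _
    apply Fin.ext
    simp only
    rw [Nat.add_mul_div_left _ _ hpw, Nat.div_eq_of_lt (Nat.mod_lt _ hpw), zero_add]

lemma sum_ind (p r w : ℕ) (hp : 0 < p) (hw : w ≤ r) (k : Fin (p^r)) :
    ∑ j : Fin (p^r), (if (p:ℤ)^w ∣ ((j:ℕ):ℤ) - ((k:ℕ):ℤ) then (1:ℚ) else 0)
      = (p:ℚ)^(r-w) := by
  classical
  rw [Finset.sum_boole, card_filter_modeq p r w hp hw k]
  push_cast
  ring

lemma count_pair_le (p r : ℕ) (hp : 0 < p) (v w : ℕ) (hw : w ≤ r) (hvw : v ≤ w)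
    (i k : Fin (p^r)) :
    ∑ j : Fin (p^r),
      (if (p:ℤ)^v ∣ ((i:ℕ):ℤ) - ((j:ℕ):ℤ) then (1:ℚ) else 0) *
      (if (p:ℤ)^w ∣ ((j:ℕ):ℤ) - ((k:ℕ):ℤ) then (1:ℚ) else 0)
    = (p:ℚ)^(r-w) * (if (p:ℤ)^v ∣ ((i:ℕ):ℤ) - ((k:ℕ):ℤ) then 1 else 0) := by
  by_cases hik : (p:ℤ)^v ∣ ((i:ℕ):ℤ) - ((k:ℕ):ℤ)
  · rw [if_pos hik, mul_one, ← sum_ind p r w hp hw k]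
    apply Finset.sum_congr rfl
    intro j _
    by_cases hjk : (p:ℤ)^w ∣ ((j:ℕ):ℤ) - ((k:ℕ):ℤ)
    · rw [if_pos hjk, if_pos, one_mul]
      have h2 : (p:ℤ)^v ∣ ((j:ℕ):ℤ) - ((k:ℕ):ℤ) :=
        dvd_trans (pow_dvd_pow _ hvw) hjk
      have h3 : ((i:ℕ):ℤ) - ((j:ℕ):ℤ)
          = (((i:ℕ):ℤ) - ((k:ℕ):ℤ)) - (((j:ℕ):ℤ) - ((k:ℕ):ℤ)) := by ring
      rw [h3]
      exact dvd_sub hik h2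
    · rw [if_neg hjk, mul_zero]
  · rw [if_neg hik, mul_zero]
    apply Finset.sum_eq_zero
    intro j _
    by_cases h1 : (p:ℤ)^v ∣ ((i:ℕ):ℤ) - ((j:ℕ):ℤ)
    · by_cases h2 : (p:ℤ)^w ∣ ((j:ℕ):ℤ) - ((k:ℕ):ℤ)
      · exfalso
        apply hik
        have h3 : ((i:ℕ):ℤ) - ((k:ℕ):ℤ)
            = (((i:ℕ):ℤ) - ((j:ℕ):ℤ)) + (((j:ℕ):ℤ) - ((k:ℕ):ℤ)) := by ring
        rw [h3]
        exact dvd_add h1 (dvd_trans (pow_dvd_pow _ hvw) h2)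
      · rw [if_neg h2, mul_zero]
    · rw [if_neg h1, zero_mul]

lemma count_pair (p r : ℕ) (hp : 0 < p) (v w : ℕ) (hv : v ≤ r) (hw : w ≤ r)
    (i k : Fin (p^r)) :
    ∑ j : Fin (p^r),
      (if (p:ℤ)^v ∣ ((i:ℕ):ℤ) - ((j:ℕ):ℤ) then (1:ℚ) else 0) *
      (if (p:ℤ)^w ∣ ((j:ℕ):ℤ) - ((k:ℕ):ℤ) then (1:ℚ) else 0)
    = (p:ℚ)^(r - max v w) * (if (p:ℤ)^(min v w) ∣ ((i:ℕ):ℤ) - ((k:ℕ):ℤ) then 1 else 0) := by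
  rcases le_total v w with h | h
  · rw [max_eq_right h, min_eq_left h]
    exact count_pair_le p r hp v w hw h i k
  · rw [max_eq_left h, min_eq_right h]
    have key := count_pair_le p r hp w v hv h k i
    calc ∑ j : Fin (p^r),
        (if (p:ℤ)^v ∣ ((i:ℕ):ℤ) - ((j:ℕ):ℤ) then (1:ℚ) else 0) *
        (if (p:ℤ)^w ∣ ((j:ℕ):ℤ) - ((k:ℕ):ℤ) then (1:ℚ) else 0)
        = ∑ j : Fin (p^r),
          (if (p:ℤ)^w ∣ ((k:ℕ):ℤ) - ((j:ℕ):ℤ) then (1:ℚ) else 0) *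
          (if (p:ℤ)^v ∣ ((j:ℕ):ℤ) - ((i:ℕ):ℤ) then (1:ℚ) else 0) := by
          apply Finset.sum_congr rfl
          intro j _
          have e1 : (if (p:ℤ)^v ∣ ((i:ℕ):ℤ) - ((j:ℕ):ℤ) then (1:ℚ) else 0)
              = (if (p:ℤ)^v ∣ ((j:ℕ):ℤ) - ((i:ℕ):ℤ) then (1:ℚ) else 0) :=
            if_congr dvd_sub_comm rfl rfl
          have e2 : (if (p:ℤ)^w ∣ ((j:ℕ):ℤ) - ((k:ℕ):ℤ) then (1:ℚ) else 0)
              = (if (p:ℤ)^w ∣ ((k:ℕ):ℤ) - ((j:ℕ):ℤ) then (1:ℚ) else 0) :=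
            if_congr dvd_sub_comm rfl rfl
          rw [e1, e2]
          ring
      _ = (p:ℚ)^(r-v) * (if (p:ℤ)^w ∣ ((k:ℕ):ℤ) - ((i:ℕ):ℤ) then 1 else 0) := key
      _ = (p:ℚ)^(r-v) * (if (p:ℤ)^w ∣ ((i:ℕ):ℤ) - ((k:ℕ):ℤ) then 1 else 0) := by
          have e3 : (if (p:ℤ)^w ∣ ((k:ℕ):ℤ) - ((i:ℕ):ℤ) then (1:ℚ) else 0)
              = (if (p:ℤ)^w ∣ ((i:ℕ):ℤ) - ((k:ℕ):ℤ) then (1:ℚ) else 0) :=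
            if_congr dvd_sub_comm rfl rfl
          rw [e3]

lemma val_facts (p : ℕ) (hp : p.Prime) (r : ℕ) (i j : Fin (p^r)) (hij : i ≠ j) :
    padicValInt p (((i:ℕ):ℤ) - ((j:ℕ):ℤ)) < r ∧
    ∀ m : ℕ, ((p:ℤ)^m ∣ ((i:ℕ):ℤ) - ((j:ℕ):ℤ) ↔
      m ≤ padicValInt p (((i:ℕ):ℤ) - ((j:ℕ):ℤ))) := by
  haveI : Fact p.Prime := ⟨hp⟩
  have hd : ((i:ℕ):ℤ) - ((j:ℕ):ℤ) ≠ 0 := by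
    intro h
    apply hij
    apply Fin.ext
    omega
  have hiff : ∀ m : ℕ, ((p:ℤ)^m ∣ ((i:ℕ):ℤ) - ((j:ℕ):ℤ) ↔
      m ≤ padicValInt p (((i:ℕ):ℤ) - ((j:ℕ):ℤ))) := by
    intro m
    rw [padicValInt_dvd_iff]
    simp [hd]
  refine ⟨?_, hiff⟩
  by_contra hle
  push_neg at hle
  have hdvd : (p:ℤ)^r ∣ ((i:ℕ):ℤ) - ((j:ℕ):ℤ) := (hiff r).mpr hle
  have hb1 : ((i:ℕ):ℤ) < ((p:ℤ))^r := by
    have := i.isLt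
    exact_mod_cast this
  have hb2 : ((j:ℕ):ℤ) < ((p:ℤ))^r := by
    have := j.isLt
    exact_mod_cast this
  have habs : |((i:ℕ):ℤ) - ((j:ℕ):ℤ)| < (p:ℤ)^r := by
    rw [abs_lt]
    constructor <;> omega
  have := Int.le_of_dvd (abs_pos.mpr hd) ((dvd_abs _ _).mpr hdvd)
  omega

lemma decompM (p r : ℕ) (hp : p.Prime) (hr : 1 ≤ r) (i j : Fin (p^r)) :
    Mpr p r i j = ∑ v ∈ range (r+1), Cc (p:ℚ) r v *
      (if (p:ℤ)^v ∣ ((i:ℕ):ℤ) - ((j:ℕ):ℤ) then 1 else 0) := by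
  by_cases hij : i = j
  · subst hij
    have hz : ((i:ℕ):ℤ) - ((i:ℕ):ℤ) = 0 := by ring
    have h1 : ∀ v ∈ range (r+1), Cc (p:ℚ) r v *
        (if (p:ℤ)^v ∣ ((i:ℕ):ℤ) - ((i:ℕ):ℤ) then (1:ℚ) else 0) = Cc (p:ℚ) r v := by
      intro v _
      rw [hz, if_pos (dvd_zero _), mul_one]
    rw [Finset.sum_congr rfl h1, sumCfull (p:ℚ) r hr, Mpr, if_pos rfl]
  · obtain ⟨hu, hiff⟩ := val_facts p hp r i j hij
    set u := padicValInt p (((i:ℕ):ℤ) - ((j:ℕ):ℤ)) with hudef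
    have h1 : ∀ v ∈ range (r+1), Cc (p:ℚ) r v *
        (if (p:ℤ)^v ∣ ((i:ℕ):ℤ) - ((j:ℕ):ℤ) then (1:ℚ) else 0)
        = if v ≤ u then Cc (p:ℚ) r v else 0 := by
      intro v _
      by_cases hvu : v ≤ u
      · rw [if_pos ((hiff v).mpr hvu), if_pos hvu, mul_one]
      · rw [if_neg (fun hdvd => hvu ((hiff v).mp hdvd)), if_neg hvu, mul_zero]
    rw [Finset.sum_congr rfl h1]
    have hsub : range (u+1) ⊆ range (r+1) := by
      apply Finset.range_subset_range.mpr; omega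
    rw [← Finset.sum_subset hsub (fun x _ hx => by
      rw [if_neg (by simp only [Finset.mem_range] at hx; omega)])]
    have h2 : ∀ v ∈ range (u+1), (if v ≤ u then Cc (p:ℚ) r v else 0) = Cc (p:ℚ) r v := by
      intro v hv
      rw [if_pos (by simp only [Finset.mem_range] at hv; omega)]
    rw [Finset.sum_congr rfl h2, sumC (p:ℚ) r u hu, Mpr, if_neg hij]

/-- The claimed inverse matrix. -/
def Nmat (p r : ℕ) : Matrix (Fin (p ^ r)) (Fin (p ^ r)) ℚ := fun i j =>
  if i = j then
    -(p : ℚ) ^ (1 - 2 * (r : ℤ)) -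
      (((p : ℚ) - 1) / ((p : ℚ) + 1)) * (r : ℚ) * (p : ℚ) ^ (1 - 2 * (r : ℤ))
  else
    -(p : ℚ) ^ (1 - 2 * (r : ℤ)) -
      ((p : ℚ) ^ (2 - 3 * (r : ℤ)) / ((p : ℚ) + 1)) *
        (-(p : ℚ) ^ ((r : ℤ) - 1) +
          (padicValInt p ((i : ℤ) - (j : ℤ)) : ℚ) * (p : ℚ) ^ ((r : ℤ) - 1) *
            ((p : ℚ) - 1))

lemma decompN (p r : ℕ) (hp : p.Prime) (hr : 1 ≤ r) (j k : Fin (p^r)) :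
    ((p:ℚ)^(2*r-1)*((p:ℚ)+1)) * Nmat p r j k
      = ∑ w ∈ range (r+1), Dd (p:ℚ) r w *
        (if (p:ℤ)^w ∣ ((j:ℕ):ℤ) - ((k:ℕ):ℤ) then 1 else 0) := by
  have hq0 : (p:ℚ) ≠ 0 := by
    exact_mod_cast hp.ne_zero
  have hqpos : (0:ℚ) < (p:ℚ) := by exact_mod_cast hp.pos
  have hq1 : (p:ℚ) + 1 ≠ 0 := by positivity
  obtain ⟨r', rfl⟩ : ∃ r', r = r' + 1 := ⟨r - 1, by omega⟩
  have e1 : (p:ℚ) ^ ((1:ℤ) - 2 * ((r'+1 : ℕ) : ℤ)) = ((p:ℚ)^(2*r'+1))⁻¹ := by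
    rw [show (1:ℤ) - 2 * ((r'+1 : ℕ) : ℤ) = -((2*r'+1 : ℕ) : ℤ) by push_cast; ring,
      zpow_neg, zpow_natCast]
  have e2 : (p:ℚ) ^ ((2:ℤ) - 3 * ((r'+1 : ℕ) : ℤ)) = ((p:ℚ)^(3*r'+1))⁻¹ := by
    rw [show (2:ℤ) - 3 * ((r'+1 : ℕ) : ℤ) = -((3*r'+1 : ℕ) : ℤ) by push_cast; ring,
      zpow_neg, zpow_natCast]
  have e3 : (p:ℚ) ^ (((r'+1 : ℕ) : ℤ) - 1) = (p:ℚ)^r' := by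
    rw [show ((r'+1 : ℕ) : ℤ) - 1 = ((r' : ℕ) : ℤ) by push_cast; ring, zpow_natCast]
  have epow : (2*(r'+1)-1 : ℕ) = 2*r'+1 := by omega
  by_cases hjk : j = k
  · subst hjk
    have hz : ((j:ℕ):ℤ) - ((j:ℕ):ℤ) = 0 := by ring
    have h1 : ∀ w ∈ range (r'+1+1), Dd (p:ℚ) (r'+1) w *
        (if (p:ℤ)^w ∣ ((j:ℕ):ℤ) - ((j:ℕ):ℤ) then (1:ℚ) else 0) = Dd (p:ℚ) (r'+1) w := by
      intro w _
      rw [hz, if_pos (dvd_zero _), mul_one]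
    rw [Finset.sum_congr rfl h1, sumDfull (p:ℚ) (r'+1) hr, Nmat, if_pos rfl, epow, e1]
    push_cast
    field_simp
    ring
  · obtain ⟨hu, hiff⟩ := val_facts p hp (r'+1) j k hjk
    set u := padicValInt p (((j:ℕ):ℤ) - ((k:ℕ):ℤ)) with hudef
    have h1 : ∀ w ∈ range (r'+1+1), Dd (p:ℚ) (r'+1) w *
        (if (p:ℤ)^w ∣ ((j:ℕ):ℤ) - ((k:ℕ):ℤ) then (1:ℚ) else 0)
        = if w ≤ u then Dd (p:ℚ) (r'+1) w else 0 := by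
      intro w _
      by_cases hwu : w ≤ u
      · rw [if_pos ((hiff w).mpr hwu), if_pos hwu, mul_one]
      · rw [if_neg (fun hdvd => hwu ((hiff w).mp hdvd)), if_neg hwu, mul_zero]
    rw [Finset.sum_congr rfl h1]
    have hsub : range (u+1) ⊆ range (r'+1+1) := by
      apply Finset.range_subset_range.mpr; omega
    rw [← Finset.sum_subset hsub (fun x _ hx => by
      rw [if_neg (by simp only [Finset.mem_range] at hx; omega)])]
    have h2 : ∀ w ∈ range (u+1), (if w ≤ u then Dd (p:ℚ) (r'+1) w else 0)
        = Dd (p:ℚ) (r'+1) w := by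
      intro w hw
      rw [if_pos (by simp only [Finset.mem_range] at hw; omega)]
    rw [Finset.sum_congr rfl h2, sumD (p:ℚ) (r'+1) u hu, Nmat, if_neg hjk, epow, e1, e2, e3]
    field_simp
    ring

lemma mulMN (p r : ℕ) (hp : p.Prime) (hr : 1 ≤ r) : Mpr p r * Nmat p r = 1 := by
  have hq0 : (p:ℚ) ≠ 0 := by exact_mod_cast hp.ne_zero
  have hqpos : (0:ℚ) < (p:ℚ) := by exact_mod_cast hp.pos
  have hs : (p:ℚ)^(2*r-1)*((p:ℚ)+1) ≠ 0 := by positivity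
  ext i k
  rw [Matrix.mul_apply, Matrix.one_apply]
  apply mul_left_cancel₀ hs
  -- the "valuation profile" of (i,k)
  set U : ℕ := if i = k then r else padicValInt p (((i:ℕ):ℤ) - ((k:ℕ):ℤ)) with hU
  have hUr : U ≤ r := by
    rw [hU]
    split_ifs with h
    · exact le_rfl
    · exact le_of_lt (val_facts p hp r i k h).1
  have hind : ∀ m, m ≤ r → (if (p:ℤ)^m ∣ ((i:ℕ):ℤ) - ((k:ℕ):ℤ) then (1:ℚ) else 0)
      = (if m ≤ U then 1 else 0) := by
    intro m hm
    rw [hU]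
    by_cases h : i = k
    · subst h
      rw [if_pos (by rw [sub_self]; exact dvd_zero _)]
      simp only [eq_self_iff_true, if_true]
      rw [if_pos hm]
    · obtain ⟨_, hiff⟩ := val_facts p hp r i k h
      simp only [if_neg h]
      by_cases hmu : m ≤ padicValInt p (((i:ℕ):ℤ) - ((k:ℕ):ℤ))
      · rw [if_pos ((hiff m).mpr hmu), if_pos hmu]
      · rw [if_neg (fun hd => hmu ((hiff m).mp hd)), if_neg hmu]
  have hUiff : (U = r) ↔ (i = k) := by
    rw [hU]
    split_ifs with h
    · simp [h]
    · simp only [iff_false, h]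
      have := (val_facts p hp r i k h).1
      omega
  calc (p:ℚ)^(2*r-1)*((p:ℚ)+1) * ∑ j, Mpr p r i j * Nmat p r j k
      = ∑ j, Mpr p r i j * ((p:ℚ)^(2*r-1)*((p:ℚ)+1) * Nmat p r j k) := by
        rw [Finset.mul_sum]; apply Finset.sum_congr rfl; intro j _; ring
    _ = ∑ j : Fin (p^r), (∑ v ∈ range (r+1), Cc (p:ℚ) r v *
          (if (p:ℤ)^v ∣ ((i:ℕ):ℤ) - ((j:ℕ):ℤ) then 1 else 0)) *
        (∑ w ∈ range (r+1), Dd (p:ℚ) r w *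
          (if (p:ℤ)^w ∣ ((j:ℕ):ℤ) - ((k:ℕ):ℤ) then 1 else 0)) := by
        apply Finset.sum_congr rfl; intro j _
        rw [decompM p r hp hr i j, decompN p r hp hr j k]
    _ = ∑ j : Fin (p^r), ∑ v ∈ range (r+1), ∑ w ∈ range (r+1),
          (Cc (p:ℚ) r v * (if (p:ℤ)^v ∣ ((i:ℕ):ℤ) - ((j:ℕ):ℤ) then 1 else 0)) *
          (Dd (p:ℚ) r w * (if (p:ℤ)^w ∣ ((j:ℕ):ℤ) - ((k:ℕ):ℤ) then 1 else 0)) := by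
        apply Finset.sum_congr rfl; intro j _
        rw [Finset.sum_mul_sum]
    _ = ∑ v ∈ range (r+1), ∑ w ∈ range (r+1), ∑ j : Fin (p^r),
          (Cc (p:ℚ) r v * (if (p:ℤ)^v ∣ ((i:ℕ):ℤ) - ((j:ℕ):ℤ) then 1 else 0)) *
          (Dd (p:ℚ) r w * (if (p:ℤ)^w ∣ ((j:ℕ):ℤ) - ((k:ℕ):ℤ) then 1 else 0)) := by
        rw [Finset.sum_comm]
        apply Finset.sum_congr rfl; intro v _
        rw [Finset.sum_comm]
    _ = ∑ v ∈ range (r+1), ∑ w ∈ range (r+1), Cc (p:ℚ) r v * Dd (p:ℚ) r w *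
          ∑ j : Fin (p^r),
            (if (p:ℤ)^v ∣ ((i:ℕ):ℤ) - ((j:ℕ):ℤ) then (1:ℚ) else 0) *
            (if (p:ℤ)^w ∣ ((j:ℕ):ℤ) - ((k:ℕ):ℤ) then (1:ℚ) else 0) := by
        apply Finset.sum_congr rfl; intro v _
        apply Finset.sum_congr rfl; intro w _
        rw [Finset.mul_sum]
        apply Finset.sum_congr rfl; intro j _
        ring
    _ = ∑ v ∈ range (r+1), ∑ w ∈ range (r+1), Cc (p:ℚ) r v * Dd (p:ℚ) r w *
          ((p:ℚ)^(r - max v w) *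
            (if (p:ℤ)^(min v w) ∣ ((i:ℕ):ℤ) - ((k:ℕ):ℤ) then 1 else 0)) := by
        apply Finset.sum_congr rfl; intro v hv
        apply Finset.sum_congr rfl; intro w hw
        rw [count_pair p r hp.pos v w
          (by simp only [Finset.mem_range] at hv; omega)
          (by simp only [Finset.mem_range] at hw; omega) i k]
    _ = ∑ v ∈ range (r+1), ∑ w ∈ range (r+1), Cc (p:ℚ) r v * Dd (p:ℚ) r w *
          (p:ℚ)^(r - max v w) * (if min v w ≤ U then 1 else 0) := by
        apply Finset.sum_congr rfl; intro v hv
        apply Finset.sum_congr rfl; intro w hw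
        rw [hind (min v w) (by
          simp only [Finset.mem_range] at hv hw
          have := min_le_left v w; omega)]
        ring
    _ = if U = r then (p:ℚ)^(2*r-1)*((p:ℚ)+1) else 0 := keyF (p:ℚ) r hr U hUr
    _ = (p:ℚ)^(2*r-1)*((p:ℚ)+1) * (if i = k then 1 else 0) := by
        by_cases h : i = k
        · rw [if_pos (hUiff.mpr h), if_pos h, mul_one]
        · rw [if_neg (fun hh => h (hUiff.mp hh)), if_neg h, mul_zero]

/-- For a prime `p` and `r ≥ 1`, `M(p^r)` is invertible over `ℚ`, with
`(M(p^r)⁻¹)_{ij}` equal to `−p^{1−2r} − ((p−1)/(p+1))·r·p^{1−2r}` if `i = j`, and to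
`−p^{1−2r} − (p^{2−3r}/(p+1))·(−p^{r−1} + ν_p(i−j)·p^{r−1}·(p−1))` otherwise. -/
theorem stmt11 (p r : ℕ) (hp : p.Prime) (hr : 1 ≤ r) :
    IsUnit (Mpr p r) ∧
    ∀ i j : Fin (p ^ r), (Mpr p r)⁻¹ i j =
      if i = j then
        -(p : ℚ) ^ (1 - 2 * (r : ℤ)) -
          (((p : ℚ) - 1) / ((p : ℚ) + 1)) * (r : ℚ) * (p : ℚ) ^ (1 - 2 * (r : ℤ))
      else
        -(p : ℚ) ^ (1 - 2 * (r : ℤ)) -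
          ((p : ℚ) ^ (2 - 3 * (r : ℤ)) / ((p : ℚ) + 1)) *
            (-(p : ℚ) ^ ((r : ℤ) - 1) +
              (padicValInt p ((i : ℤ) - (j : ℤ)) : ℚ) * (p : ℚ) ^ ((r : ℤ) - 1) *
                ((p : ℚ) - 1)) := by
  have h := mulMN p r hp hr
  refine ⟨@isUnit_of_invertible _ _ _ (invertibleOfRightInverse _ _ h), ?_⟩
  intro i j
  rw [Matrix.inv_eq_right_inv h]
  simp only [Nmat]
end

section
/- Let p be a prime and r ≥ 1 an integer, and let A' = (M(p^r)_{1̂,1̂})⁻¹, where M(p^r)_{1̂,1̂} is the (p^r−1)×(p^r−1) matrix over ℚ obtained from M(p^r) by deleting the row and column indexed by 0, with remaining rows and columns indexed by {1, …, p^r−1}. Then for every i ∈ {1, …, p^r−1}, the i-th row sum satisfies Σ_{j=1}^{p^r−1} A'_{ij} = p^{1−r}·(−pr + r − 1)/((p−1)r + p + 1) + (p^{1−r}·(p−1)/((p−1)r + p + 1))·ν_p(i). Moreover, the sum of all entries of A' equals −(p−1)·p·r/((p−1)r + p + 1). -/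
/-- `M(p^r)_{1̂,1̂}`: the matrix obtained from `M(p^r)` by deleting the row and column
indexed by `0`, with remaining rows and columns indexed by `{1, …, p^r−1}`. -/
def MprSub (p r : ℕ) :
    Matrix {i : Fin (p ^ r) // (i : ℕ) ≠ 0} {i : Fin (p ^ r) // (i : ℕ) ≠ 0} ℚ :=
  (Mpr p r).submatrix Subtype.val Subtype.val

open Finset Matrix

namespace Stmt14Aux

/-- the coefficients `c_s` in the decomposition `M i j = ∑ s, c_s [p^s ∣ i - j]`. -/
def cc (p r s : ℕ) : ℚ :=
  if s = 0 then 1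
  else if s = r then -((p : ℚ) ^ (2 * r - 1) + (p : ℚ) ^ (2 * r - 2))
  else (p : ℚ) ^ (2 * s) - (p : ℚ) ^ (2 * s - 2)

lemma cc_mid (p r s : ℕ) (h0 : s ≠ 0) (hr : s ≠ r) :
    cc p r s = (p : ℚ) ^ (2 * s) - (p : ℚ) ^ (2 * s - 2) := by
  unfold cc; rw [if_neg h0, if_neg hr]

lemma T1 (p r : ℕ) : ∀ m, m < r → ∑ s ∈ range (m + 1), cc p r s = (p : ℚ) ^ (2 * m) := by
  intro m
  induction m with
  | zero => intro _; simp [cc]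
  | succ m ih =>
    intro hm
    rw [Finset.sum_range_succ, ih (by omega), cc_mid p r (m+1) (by omega) (by omega)]
    have h1 : 2 * (m + 1) - 2 = 2 * m := by omega
    rw [h1]; ring

lemma T1full (p r : ℕ) (hr : 1 ≤ r) :
    ∑ s ∈ range (r + 1), cc p r s = -(p : ℚ) ^ (2 * r - 1) := by
  obtain ⟨m, rfl⟩ : ∃ m, r = m + 1 := ⟨r - 1, by omega⟩
  rw [Finset.sum_range_succ, T1 p (m+1) m (by omega)]
  have h1 : cc p (m+1) (m+1) = -((p : ℚ) ^ (2*(m+1) - 1) + (p : ℚ) ^ (2*(m+1) - 2)) := by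
    unfold cc; rw [if_neg (by omega), if_pos rfl]
  have h2 : 2 * (m + 1) - 1 = 2 * m + 1 := by omega
  have h3 : 2 * (m + 1) - 2 = 2 * m := by omega
  rw [h1, h2, h3]; ring

lemma T2 (p r : ℕ) : ∀ m, m < r →
    ∑ s ∈ range (m + 1), cc p r s * (p : ℚ) ^ (r - s) =
      (p : ℚ) ^ (r - 1) * ((p : ℚ) ^ (m + 1) + (p : ℚ) ^ m - 1) := by
  intro m
  induction m with
  | zero =>
    intro h
    have h1 : (p : ℚ) ^ (r - 1) * (p : ℚ) ^ 1 = (p : ℚ) ^ (r - 0) := by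
      rw [← pow_add]; congr 1; omega
    rw [pow_one] at h1
    rw [Finset.sum_range_one, show cc p r 0 = 1 from by simp [cc], one_mul, ← h1]; ring
  | succ m ih =>
    intro hm
    rw [Finset.sum_range_succ, ih (by omega), cc_mid p r (m+1) (by omega) (by omega)]
    have h2 : (p : ℚ) ^ (2 * (m + 1)) * (p : ℚ) ^ (r - (m + 1)) =
        (p : ℚ) ^ (r - 1) * (p : ℚ) ^ (m + 2) := by
      rw [← pow_add, ← pow_add]; congr 1; omega
    have h3 : (p : ℚ) ^ (2 * (m + 1) - 2) * (p : ℚ) ^ (r - (m + 1)) =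
        (p : ℚ) ^ (r - 1) * (p : ℚ) ^ m := by
      rw [← pow_add, ← pow_add]; congr 1; omega
    rw [sub_mul, h2, h3]; ring

lemma T2full (p r : ℕ) (hr : 1 ≤ r) :
    ∑ s ∈ range (r + 1), cc p r s * (p : ℚ) ^ (r - s) = -(p : ℚ) ^ (r - 1) := by
  obtain ⟨m, rfl⟩ : ∃ m, r = m + 1 := ⟨r - 1, by omega⟩
  rw [Finset.sum_range_succ, T2 p (m+1) m (by omega)]
  have h1 : cc p (m+1) (m+1) = -((p : ℚ) ^ (2*(m+1) - 1) + (p : ℚ) ^ (2*(m+1) - 2)) := by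
    unfold cc; rw [if_neg (by omega), if_pos rfl]
  have h2 : (p : ℚ) ^ (2 * (m + 1) - 1) = (p : ℚ) ^ (m + 1 - 1) * (p : ℚ) ^ (m + 1) := by
    rw [← pow_add]; congr 1; omega
  have h3 : (p : ℚ) ^ (2 * (m + 1) - 2) = (p : ℚ) ^ (m + 1 - 1) * (p : ℚ) ^ m := by
    rw [← pow_add]; congr 1; omega
  rw [h1, h2, h3]
  simp only [Nat.add_sub_cancel, Nat.sub_self, pow_zero]
  ring

lemma sum_ind_single (q : ℕ) (hq : 0 < q) (c : ℤ) :
    ∑ y : Fin q, (if (q : ℤ) ∣ (c - (y : ℤ)) then (1 : ℚ) else 0) = 1 := by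
  have hq' : (0 : ℤ) < (q : ℤ) := by exact_mod_cast hq
  have hmod1 : 0 ≤ c % q := Int.emod_nonneg c hq'.ne'
  have hmod2 : c % q < q := Int.emod_lt_of_pos c hq'
  set y0 : Fin q := ⟨(c % q).toNat, by omega⟩ with hy0
  have hy0v : ((y0 : ℕ) : ℤ) = c % q := by
    simp only [hy0]
    omega
  rw [Finset.sum_eq_single y0]
  · rw [if_pos]
    rw [hy0v, Int.emod_def]
    exact ⟨c / q, by ring⟩
  · intro y _ hy
    rw [if_neg]
    intro hdvd
    have hd0 : (q : ℤ) ∣ (c - (y0 : ℤ)) := by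
      rw [hy0v, Int.emod_def]; exact ⟨c / q, by ring⟩
    have : (q : ℤ) ∣ ((y0 : ℤ) - (y : ℤ)) := by
      have := dvd_sub hdvd hd0
      simpa using this
    have hz : ((y0 : ℤ) - (y : ℤ)) = 0 := by
      apply Int.eq_zero_of_abs_lt_dvd this
      have h1 : ((y0 : ℕ) : ℤ) < q := by exact_mod_cast y0.2
      have h2 : ((y : ℕ) : ℤ) < q := by exact_mod_cast y.2
      have h3 : (0 : ℤ) ≤ (y0 : ℕ) := by positivity
      have h4 : (0 : ℤ) ≤ (y : ℕ) := by positivity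
      rw [abs_lt]; omega
    apply hy
    have : ((y : ℕ) : ℤ) = ((y0 : ℕ) : ℤ) := by omega
    exact Fin.ext (by exact_mod_cast this)
  · intro h; exact absurd (Finset.mem_univ y0) h

lemma sum_ind_mul (n k q : ℕ) (hq : 0 < q) (hn : n = k * q) (c : ℤ) :
    ∑ j : Fin n, (if (q : ℤ) ∣ (c - (j : ℤ)) then (1 : ℚ) else 0) = k := by
  subst hn
  rw [← finProdFinEquiv.sum_comp (fun j : Fin (k * q) =>
    if (q : ℤ) ∣ (c - ((j : ℕ) : ℤ)) then (1 : ℚ) else 0)]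
  rw [Fintype.sum_prod_type]
  have key : ∀ (x : Fin k) (y : Fin q),
      (if (q : ℤ) ∣ (c - ((finProdFinEquiv (x, y) : ℕ) : ℤ)) then (1 : ℚ) else 0)
        = (if (q : ℤ) ∣ (c - (y : ℤ)) then (1 : ℚ) else 0) := by
    intro x y
    have hval : ((finProdFinEquiv (x, y) : ℕ) : ℤ) = (y : ℤ) + q * x := by
      simp [finProdFinEquiv]
    have hiff : ((q : ℤ) ∣ (c - ((finProdFinEquiv (x, y) : ℕ) : ℤ))) ↔
        ((q : ℤ) ∣ (c - (y : ℤ))) := by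
      rw [hval]
      constructor
      · intro hd
        have h2 := dvd_add hd ⟨(x : ℤ), rfl⟩
        convert h2 using 1; rfl; ring
      · intro hd
        have h2 := dvd_sub hd ⟨(x : ℤ), rfl⟩
        convert h2 using 1; rfl; ring
    exact if_congr hiff rfl rfl
  simp_rw [key]
  rw [Finset.sum_const, sum_ind_single q hq c]
  simp

lemma sum_ind_pow (p r : ℕ) (hp : 0 < p) {m : ℕ} (hm : m ≤ r) (c : ℤ) :
    ∑ j : Fin (p ^ r), (if (p : ℤ) ^ m ∣ (c - (j : ℤ)) then (1 : ℚ) else 0)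
      = (p : ℚ) ^ (r - m) := by
  have h := sum_ind_mul (p ^ r) (p ^ (r - m)) (p ^ m) (pow_pos hp m)
    (by rw [← pow_add]; congr 1; omega) c
  have hcast : ((p ^ m : ℕ) : ℤ) = (p : ℤ) ^ m := by push_cast; ring
  rw [hcast] at h
  rw [h]
  push_cast
  ring

lemma dvd_val_iff (p : ℕ) (hp : p.Prime) {a : ℕ} (ha : a ≠ 0) (s : ℕ) :
    ((p : ℤ) ^ s ∣ (a : ℤ)) ↔ s ≤ padicValNat p a := by
  haveI := Fact.mk hp
  rw [← Nat.cast_pow, Int.natCast_dvd_natCast, padicValNat_dvd_iff]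
  simp [ha]

lemma val_lt (p r : ℕ) (hp : p.Prime) {a : ℕ} (h0 : a ≠ 0) (hlt : a < p ^ r) :
    padicValNat p a < r := by
  haveI := Fact.mk hp
  have hd : p ^ (padicValNat p a) ∣ a := pow_padicValNat_dvd
  have h1 := Nat.le_of_dvd (Nat.pos_of_ne_zero h0) hd
  by_contra h
  push_neg at h
  have h2 : p ^ r ≤ p ^ (padicValNat p a) := Nat.pow_le_pow_right hp.one_lt.le h
  omega

lemma NU (p r : ℕ) (hp : p.Prime) {a : ℕ} (h0 : a ≠ 0) (hlt : a < p ^ r) :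
    (padicValNat p a : ℚ) = ∑ t ∈ Ico 1 r, (if (p : ℤ) ^ t ∣ (a : ℤ) then (1 : ℚ) else 0) := by
  have hw := val_lt p r hp h0 hlt
  calc (padicValNat p a : ℚ)
      = ∑ t ∈ Ico 1 (padicValNat p a + 1), (1 : ℚ) := by
        rw [Finset.sum_const, Nat.card_Ico]; simp
    _ = ∑ t ∈ Ico 1 (padicValNat p a + 1),
          (if (p : ℤ) ^ t ∣ (a : ℤ) then (1 : ℚ) else 0) := by
        apply Finset.sum_congr rfl
        intro t ht
        rw [if_pos ((dvd_val_iff p hp h0 t).2 (by simp at ht; omega))]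
    _ = ∑ t ∈ Ico 1 r, (if (p : ℤ) ^ t ∣ (a : ℤ) then (1 : ℚ) else 0) := by
        apply Finset.sum_subset
        · apply Finset.Ico_subset_Ico le_rfl; omega
        · intro t ht hnt
          rw [if_neg]
          rw [dvd_val_iff p hp h0 t]
          simp at ht hnt
          omega

lemma MC (p r : ℕ) (hp : p.Prime) (hr : 1 ≤ r) (i j : Fin (p ^ r)) :
    Mpr p r i j = ∑ s ∈ range (r + 1),
      cc p r s * (if (p : ℤ) ^ s ∣ ((i : ℤ) - (j : ℤ)) then (1 : ℚ) else 0) := by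
  haveI := Fact.mk hp
  by_cases hij : i = j
  · subst hij
    simp only [sub_self, dvd_zero, if_pos, mul_one]
    rw [T1full p r hr, Mpr]
    simp
  · have hd : (i : ℤ) - (j : ℤ) ≠ 0 := by
      intro h
      apply hij
      apply Fin.ext
      omega
    set w := padicValInt p ((i : ℤ) - (j : ℤ)) with hwdef
    have hiv : ∀ s, ((p : ℤ) ^ s ∣ ((i : ℤ) - (j : ℤ))) ↔ s ≤ w := by
      intro s
      rw [padicValInt_dvd_iff]
      simp [hd]
      exact Iff.rfl
    have hw : w < r := by
      have h1 : w = padicValNat p ((i : ℤ) - (j : ℤ)).natAbs := rfl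
      rw [h1]
      apply val_lt p r hp
      · omega
      · have h2 : (i : ℕ) < p ^ r := i.2
        have h3 : (j : ℕ) < p ^ r := j.2
        omega
    have : ∑ s ∈ range (r + 1),
        cc p r s * (if (p : ℤ) ^ s ∣ ((i : ℤ) - (j : ℤ)) then (1 : ℚ) else 0)
        = ∑ s ∈ range (w + 1), cc p r s := by
      rw [← Finset.sum_subset (Finset.range_subset_range.2 (by omega : w + 1 ≤ r + 1))]
      · apply Finset.sum_congr rfl
        intro s hs
        rw [if_pos ((hiv s).2 (by simp at hs; omega)), mul_one]
      · intro s hs hns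
        rw [if_neg, mul_zero]
        rw [hiv s]
        simp at hs hns
        omega
    rw [this, T1 p r w hw, Mpr]
    rw [if_neg hij]

lemma ind_mul_ind_left {P : ℤ} {s t : ℕ} (h : s ≤ t) (x y : ℤ) :
    (if P ^ s ∣ (x - y) then (1 : ℚ) else 0) * (if P ^ t ∣ y then (1 : ℚ) else 0)
      = (if P ^ s ∣ x then (1 : ℚ) else 0) * (if P ^ t ∣ (0 - y) then (1 : ℚ) else 0) := by
  by_cases hy : P ^ t ∣ y
  · have hsy : P ^ s ∣ y := dvd_trans (pow_dvd_pow P h) hy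
    have hiff : (P ^ s ∣ x - y) ↔ (P ^ s ∣ x) := by
      constructor
      · intro hd; have := dvd_add hd hsy; simpa using this
      · intro hd; exact dvd_sub hd hsy
    simp [hiff, hy, zero_sub, dvd_neg]
  · simp [hy, zero_sub, dvd_neg]

lemma ind_mul_ind_right {P : ℤ} {s t : ℕ} (h : t ≤ s) (x y : ℤ) :
    (if P ^ s ∣ (x - y) then (1 : ℚ) else 0) * (if P ^ t ∣ y then (1 : ℚ) else 0)
      = (if P ^ t ∣ x then (1 : ℚ) else 0) * (if P ^ s ∣ (x - y) then (1 : ℚ) else 0) := by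
  by_cases hs : P ^ s ∣ (x - y)
  · have hty : P ^ t ∣ (x - y) := dvd_trans (pow_dvd_pow P h) hs
    have hiff : (P ^ t ∣ y) ↔ (P ^ t ∣ x) := by
      constructor
      · intro hd; have := dvd_add hty hd; simpa using this
      · intro hd
        have := dvd_sub hd hty
        simpa using this
    simp [hiff, hs]
  · simp [hs]

lemma inner_val (p r : ℕ) (hp : p.Prime) (i : Fin (p ^ r)) (hi : (i : ℕ) ≠ 0)
    (s t : ℕ) (hs : s ≤ r) (ht : t ≤ r) :
    ∑ j : Fin (p ^ r), (if (p : ℤ) ^ s ∣ ((i : ℤ) - (j : ℤ)) then (1 : ℚ) else 0) *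
        (if (p : ℤ) ^ t ∣ (j : ℤ) then (1 : ℚ) else 0)
      = (if min s t ≤ padicValNat p (i : ℕ) then (1 : ℚ) else 0) * (p : ℚ) ^ (r - max s t) := by
  have hiz : (i : ℤ) = ((i : ℕ) : ℤ) := rfl
  rcases le_total s t with h | h
  · simp_rw [ind_mul_ind_left h]
    rw [← Finset.mul_sum, sum_ind_pow p r hp.pos ht 0, min_eq_left h, max_eq_right h]
    congr 1
    rw [hiz, if_congr (dvd_val_iff p hp hi s) rfl rfl]
  · simp_rw [ind_mul_ind_right h]
    rw [← Finset.mul_sum, sum_ind_pow p r hp.pos hs (i : ℤ), min_eq_right h, max_eq_left h]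
    congr 1
    rw [hiz, if_congr (dvd_val_iff p hp hi t) rfl rfl]

/-- value of `∑ s, cc s * inner_val s t` when `1 ≤ t ≤ v` -/
lemma At_le (p r : ℕ) (hr : 1 ≤ r) (v : ℕ) (hv : v < r) (t : ℕ) (ht1 : 1 ≤ t) (htv : t ≤ v) :
    ∑ s ∈ range (r + 1), cc p r s *
        ((if min s t ≤ v then (1 : ℚ) else 0) * (p : ℚ) ^ (r - max s t))
      = -((p : ℚ) ^ (r - 1) * (p : ℚ) ^ t) := by
  have htr : t + 1 ≤ r + 1 := by omega
  rw [Finset.range_eq_Ico, ← Finset.sum_Ico_consecutive _ (by omega : 0 ≤ t + 1) htr]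
  have h1 : ∑ s ∈ Ico 0 (t + 1), cc p r s *
      ((if min s t ≤ v then (1 : ℚ) else 0) * (p : ℚ) ^ (r - max s t))
      = (∑ s ∈ range (t + 1), cc p r s) * (p : ℚ) ^ (r - t) := by
    rw [← Finset.range_eq_Ico, Finset.sum_mul]
    apply Finset.sum_congr rfl
    intro s hs
    simp only [Finset.mem_range] at hs
    rw [min_eq_left (by omega), max_eq_right (by omega), if_pos (by omega)]
    ring
  have h2 : ∑ s ∈ Ico (t + 1) (r + 1), cc p r s *
      ((if min s t ≤ v then (1 : ℚ) else 0) * (p : ℚ) ^ (r - max s t))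
      = ∑ s ∈ Ico (t + 1) (r + 1), cc p r s * (p : ℚ) ^ (r - s) := by
    apply Finset.sum_congr rfl
    intro s hs
    simp only [Finset.mem_Ico] at hs
    rw [min_eq_right (by omega), max_eq_left (by omega), if_pos (by omega)]
    ring
  rw [h1, h2, Finset.sum_Ico_eq_sub _ htr, T1 p r t (by omega), T2full p r hr,
    T2 p r t (by omega)]
  have h3 : (p : ℚ) ^ (2 * t) * (p : ℚ) ^ (r - t) = (p : ℚ) ^ (r - 1) * (p : ℚ) ^ (t + 1) := by
    rw [← pow_add, ← pow_add]; congr 1; omega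
  rw [h3]; ring

/-- value of `∑ s, cc s * inner_val s t` when `v < t ≤ r` -/
lemma At_gt (p r : ℕ) (v t : ℕ) (hvt : v < t) (htr : t ≤ r) :
    ∑ s ∈ range (r + 1), cc p r s *
        ((if min s t ≤ v then (1 : ℚ) else 0) * (p : ℚ) ^ (r - max s t))
      = (p : ℚ) ^ (2 * v) * (p : ℚ) ^ (r - t) := by
  have htr : t + 1 ≤ r + 1 := by omega
  rw [Finset.range_eq_Ico, ← Finset.sum_Ico_consecutive _ (by omega : 0 ≤ t + 1) htr]
  have h2 : ∑ s ∈ Ico (t + 1) (r + 1), cc p r s *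
      ((if min s t ≤ v then (1 : ℚ) else 0) * (p : ℚ) ^ (r - max s t)) = 0 := by
    apply Finset.sum_eq_zero
    intro s hs
    simp only [Finset.mem_Ico] at hs
    rw [min_eq_right (by omega), if_neg (by omega)]
    ring
  have h1 : ∑ s ∈ Ico 0 (t + 1), cc p r s *
      ((if min s t ≤ v then (1 : ℚ) else 0) * (p : ℚ) ^ (r - max s t))
      = (∑ s ∈ range (v + 1), cc p r s) * (p : ℚ) ^ (r - t) := by
    rw [← Finset.range_eq_Ico, Finset.sum_mul]
    rw [← Finset.sum_subset (Finset.range_subset_range.2 (by omega : v + 1 ≤ t + 1))]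
    · apply Finset.sum_congr rfl
      intro s hs
      simp only [Finset.mem_range] at hs
      rw [min_eq_left (by omega), max_eq_right (by omega), if_pos (by omega)]
      ring
    · intro s hs hns
      simp only [Finset.mem_range] at hs hns
      rw [min_eq_left (by omega), if_neg (by omega)]
      ring
  rw [h1, h2, T1 p r v (by omega), add_zero]

/-- row sums of the full matrix -/
lemma ROW1 (p r : ℕ) (hp : p.Prime) (hr : 1 ≤ r) (i : Fin (p ^ r)) :
    ∑ j : Fin (p ^ r), Mpr p r i j = -(p : ℚ) ^ (r - 1) := by
  simp_rw [MC p r hp hr i]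
  rw [Finset.sum_comm]
  have h1 : ∀ s ∈ range (r + 1),
      ∑ j : Fin (p ^ r), cc p r s * (if (p : ℤ) ^ s ∣ ((i : ℤ) - (j : ℤ)) then (1 : ℚ) else 0)
        = cc p r s * (p : ℚ) ^ (r - s) := by
    intro s hs
    simp only [Finset.mem_range] at hs
    rw [← Finset.mul_sum, sum_ind_pow p r hp.pos (by omega : s ≤ r) (i : ℤ)]
  rw [Finset.sum_congr rfl h1, T2full p r hr]

lemma Mi0 (p r : ℕ) [NeZero (p ^ r)] (i : Fin (p ^ r)) (hi : (i : ℕ) ≠ 0) :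
    Mpr p r i 0 = (p : ℚ) ^ (2 * padicValNat p (i : ℕ)) := by
  have h0 : i ≠ 0 := by
    intro h; apply hi; rw [h]; simp
  rw [Mpr]
  simp only [if_neg h0]
  congr 2

/-- weighted row sums of the full matrix -/
lemma ROW2 (p r : ℕ) (hp : p.Prime) (hr : 1 ≤ r) (i : Fin (p ^ r)) (hi : (i : ℕ) ≠ 0) :
    ∑ j : Fin (p ^ r), Mpr p r i j * (padicValNat p (j : ℕ) : ℚ)
      = ((p : ℚ) ^ r - (p : ℚ) * ((p : ℚ) ^ padicValNat p (i : ℕ)) ^ 2) / ((p : ℚ) - 1)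
        - ((r : ℚ) - 1) * ((p : ℚ) ^ padicValNat p (i : ℕ)) ^ 2 := by
  haveI : NeZero (p ^ r) := ⟨(pow_pos hp.pos r).ne'⟩
  set v := padicValNat p (i : ℕ) with hvdef
  have hv : v < r := val_lt p r hp hi i.2
  have hp1 : (1 : ℚ) < (p : ℚ) := by exact_mod_cast hp.one_lt
  have hpne : (p : ℚ) ≠ 0 := by positivity
  have hpne1 : (p : ℚ) ≠ 1 := by linarith
  have hinv1 : ((p : ℚ)⁻¹) ≠ 1 := fun h => hpne1 (by rwa [inv_eq_one] at h)
  -- remove the j = 0 term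
  rw [← Finset.add_sum_erase Finset.univ _ (Finset.mem_univ (0 : Fin (p ^ r)))]
  have h0 : Mpr p r i 0 * (padicValNat p ((0 : Fin (p ^ r)) : ℕ) : ℚ) = 0 := by
    have : ((0 : Fin (p ^ r)) : ℕ) = 0 := rfl
    rw [this]
    simp
  rw [h0, zero_add]
  -- expand ν and M
  have hstep : ∀ j ∈ Finset.univ.erase (0 : Fin (p ^ r)),
      Mpr p r i j * (padicValNat p (j : ℕ) : ℚ)
        = ∑ s ∈ range (r + 1), ∑ t ∈ Ico 1 r,
            (cc p r s * (if (p : ℤ) ^ s ∣ ((i : ℤ) - (j : ℤ)) then (1 : ℚ) else 0)) *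
              (if (p : ℤ) ^ t ∣ (j : ℤ) then (1 : ℚ) else 0) := by
    intro j hj
    have hj0 : (j : ℕ) ≠ 0 := by
      simp only [Finset.mem_erase, Finset.mem_univ, and_true] at hj
      intro h
      exact hj (Fin.ext (by simpa using h))
    rw [MC p r hp hr i j, NU p r hp hj0 j.2, Finset.sum_mul_sum]
  rw [Finset.sum_congr rfl hstep]
  rw [Finset.sum_comm]
  -- per s: swap with t and evaluate over j
  have hstep2 : ∀ s ∈ range (r + 1),
      ∑ j ∈ Finset.univ.erase (0 : Fin (p ^ r)), ∑ t ∈ Ico 1 r,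
          (cc p r s * (if (p : ℤ) ^ s ∣ ((i : ℤ) - (j : ℤ)) then (1 : ℚ) else 0)) *
            (if (p : ℤ) ^ t ∣ (j : ℤ) then (1 : ℚ) else 0)
        = ∑ t ∈ Ico 1 r, cc p r s *
            (((if min s t ≤ v then (1 : ℚ) else 0) * (p : ℚ) ^ (r - max s t))
              - (if s ≤ v then (1 : ℚ) else 0)) := by
    intro s hs
    simp only [Finset.mem_range] at hs
    rw [Finset.sum_comm]
    apply Finset.sum_congr rfl
    intro t ht
    simp only [Finset.mem_Ico] at ht
    rw [Finset.sum_erase_eq_sub (Finset.mem_univ (0 : Fin (p ^ r)))]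
    simp_rw [mul_assoc, ← Finset.mul_sum]
    rw [inner_val p r hp i hi s t (by omega) (by omega)]
    have hz : ((0 : Fin (p ^ r)) : ℤ) = 0 := by simp
    have h00 : (if (p : ℤ) ^ t ∣ ((0 : Fin (p ^ r)) : ℤ) then (1 : ℚ) else 0) = 1 := by
      rw [hz]; simp
    have h01 : (if (p : ℤ) ^ s ∣ ((i : ℤ) - ((0 : Fin (p ^ r)) : ℤ)) then (1 : ℚ) else 0)
        = (if s ≤ v then (1 : ℚ) else 0) := by
      rw [hz, sub_zero]
      exact if_congr (dvd_val_iff p hp hi s) rfl rfl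
    rw [h00, h01, mul_one, mul_sub]
  rw [Finset.sum_congr rfl hstep2]
  -- split the two parts
  simp_rw [mul_sub, Finset.sum_sub_distrib]
  -- second part: ∑ s ∑ t, cc s * [s ≤ v] = (r - 1) * p^(2v)
  have hpart2 : ∑ s ∈ range (r + 1), ∑ _t ∈ Ico 1 r,
      cc p r s * (if s ≤ v then (1 : ℚ) else 0)
      = ((r : ℚ) - 1) * (p : ℚ) ^ (2 * v) := by
    have h1 : ∀ s ∈ range (r + 1), ∑ _t ∈ Ico 1 r, cc p r s * (if s ≤ v then (1 : ℚ) else 0)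
        = ((r : ℚ) - 1) * (cc p r s * (if s ≤ v then (1 : ℚ) else 0)) := by
      intro s _
      rw [Finset.sum_const, Nat.card_Ico, nsmul_eq_mul]
      congr 1
      push_cast [Nat.cast_sub hr]
      ring
    rw [Finset.sum_congr rfl h1, ← Finset.mul_sum]
    congr 1
    rw [← Finset.sum_subset (Finset.range_subset_range.2 (by omega : v + 1 ≤ r + 1))]
    · rw [← T1 p r v hv]
      apply Finset.sum_congr rfl
      intro s hs
      simp only [Finset.mem_range] at hs
      rw [if_pos (by omega), mul_one]
    · intro s hs hns
      simp only [Finset.mem_range] at hs hns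
      rw [if_neg (by omega), mul_zero]
  rw [hpart2]
  -- first part
  rw [Finset.sum_comm]
  have hsplit : Ico 1 r = Ico 1 (v + 1) ∪ Ico (v + 1) r := by
    rw [Finset.Ico_union_Ico_eq_Ico (by omega) (by omega)]
  rw [hsplit, Finset.sum_union (Finset.Ico_disjoint_Ico_consecutive 1 (v + 1) r)]
  have hb1 : ∑ t ∈ Ico 1 (v + 1), ∑ s ∈ range (r + 1), cc p r s *
      ((if min s t ≤ v then (1 : ℚ) else 0) * (p : ℚ) ^ (r - max s t))
      = -((p : ℚ) ^ (r - 1) * (((p : ℚ) ^ (v + 1) - (p : ℚ) ^ 1) / ((p : ℚ) - 1))) := by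
    have h1 : ∀ t ∈ Ico 1 (v + 1), ∑ s ∈ range (r + 1), cc p r s *
        ((if min s t ≤ v then (1 : ℚ) else 0) * (p : ℚ) ^ (r - max s t))
        = -((p : ℚ) ^ (r - 1) * (p : ℚ) ^ t) := by
      intro t ht
      simp only [Finset.mem_Ico] at ht
      exact At_le p r hr v hv t (by omega) (by omega)
    rw [Finset.sum_congr rfl h1]
    have hg : ∑ t ∈ Ico 1 (v + 1), (p : ℚ) ^ t
        = ((p : ℚ) ^ (v + 1) - (p : ℚ) ^ 1) / ((p : ℚ) - 1) :=
      geom_sum_Ico hpne1 (by omega)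
    have h2 : ∑ t ∈ Ico 1 (v + 1), -((p : ℚ) ^ (r - 1) * (p : ℚ) ^ t)
        = -((p : ℚ) ^ (r - 1) * ∑ t ∈ Ico 1 (v + 1), (p : ℚ) ^ t) := by
      rw [Finset.mul_sum]
      simp
    rw [h2, hg]
  have hb2 : ∑ t ∈ Ico (v + 1) r, ∑ s ∈ range (r + 1), cc p r s *
      ((if min s t ≤ v then (1 : ℚ) else 0) * (p : ℚ) ^ (r - max s t))
      = (p : ℚ) ^ (2 * v) *
          (((p : ℚ) ^ r * ((p : ℚ) ^ v)⁻¹ - (p : ℚ) ^ 1) / ((p : ℚ) - 1)) := by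
    have h1 : ∀ t ∈ Ico (v + 1) r, ∑ s ∈ range (r + 1), cc p r s *
        ((if min s t ≤ v then (1 : ℚ) else 0) * (p : ℚ) ^ (r - max s t))
        = (p : ℚ) ^ (2 * v) * (p : ℚ) ^ (r - t) := by
      intro t ht
      simp only [Finset.mem_Ico] at ht
      exact At_gt p r v t (by omega) (by omega)
    rw [Finset.sum_congr rfl h1, ← Finset.mul_sum]
    congr 1
    rw [Finset.sum_Ico_reflect _ (v + 1) (by omega : r ≤ r + 1)]
    have h2 : r + 1 - r = 1 := by omega
    have h3 : r + 1 - (v + 1) = r - v := by omega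
    rw [h2, h3, geom_sum_Ico hpne1 (by omega : 1 ≤ r - v)]
    congr 2
    rw [pow_sub₀ _ hpne (by omega : v ≤ r)]
  rw [hb1, hb2]
  -- final algebra
  have e1 : (p : ℚ) ^ (r - 1) = (p : ℚ) ^ r * (p : ℚ)⁻¹ := by
    rw [pow_sub₀ _ hpne hr, pow_one]
  have e2 : (p : ℚ) ^ (v + 1) = (p : ℚ) ^ v * (p : ℚ) := by rw [pow_succ]
  have e3 : (p : ℚ) ^ (2 * v) = ((p : ℚ) ^ v) ^ 2 := by rw [mul_comm, pow_mul]
  rw [e1, e2, e3]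
  have hXne : (p : ℚ) ^ r ≠ 0 := pow_ne_zero _ hpne
  have hVne : (p : ℚ) ^ v ≠ 0 := pow_ne_zero _ hpne
  have hd1 : (p : ℚ) - 1 ≠ 0 := sub_ne_zero.2 hpne1
  have hd2 : (p : ℚ)⁻¹ - 1 ≠ 0 := sub_ne_zero.2 hinv1
  have hd3 : (p : ℚ) * (p : ℚ) ^ r * (p : ℚ) ^ v - (p : ℚ) ^ 2 * (p : ℚ) ^ r * (p : ℚ) ^ v ≠ 0 := by
    have h : (p : ℚ) * (p : ℚ) ^ r * (p : ℚ) ^ v - (p : ℚ) ^ 2 * (p : ℚ) ^ r * (p : ℚ) ^ v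
        = (p : ℚ) * (p : ℚ) ^ r * (p : ℚ) ^ v * (1 - (p : ℚ)) := by ring
    rw [h]
    exact mul_ne_zero (mul_ne_zero (mul_ne_zero hpne hXne) hVne)
      (sub_ne_zero.2 (Ne.symm hpne1))
  field_simp [hd3]
  ring

lemma sum_subtype_ne (n : ℕ) [NeZero n] (f : Fin n → ℚ) :
    ∑ j : {i : Fin n // (i : ℕ) ≠ 0}, f j.1 = (∑ j : Fin n, f j) - f 0 := by
  rw [← Finset.sum_erase_eq_sub (Finset.mem_univ (0 : Fin n))]
  have hmem : ∀ x : Fin n, x ∈ Finset.univ.erase (0 : Fin n) ↔ (x : ℕ) ≠ 0 := fun x => by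
    simp only [Finset.mem_erase, Finset.mem_univ, and_true, ne_eq, Fin.ext_iff, Fin.val_zero]
  exact (Finset.sum_subtype _ hmem f).symm

section Main

/-- plain row sums of the submatrix -/
lemma ROW1sub (p r : ℕ) (hp : p.Prime) (hr : 1 ≤ r) [NeZero (p ^ r)] (i : {i : Fin (p ^ r) // (i : ℕ) ≠ 0}) :
    ∑ j : {i : Fin (p ^ r) // (i : ℕ) ≠ 0}, MprSub p r i j
      = -(p : ℚ) ^ (r - 1) - (p : ℚ) ^ (2 * padicValNat p (i.1 : ℕ)) := by
  have h := sum_subtype_ne (p ^ r) (fun j => Mpr p r i.1 j)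
  rw [MprSub]
  simp only [Matrix.submatrix_apply]
  rw [h, ROW1 p r hp hr, Mi0 p r i.1 i.2]

/-- the key identity : B * (a + b ν) = 1 -/
lemma BV (p r : ℕ) (hp : p.Prime) (hr : 1 ≤ r) [NeZero (p ^ r)] (i : {i : Fin (p ^ r) // (i : ℕ) ≠ 0}) :
    ∑ j : {i : Fin (p ^ r) // (i : ℕ) ≠ 0}, MprSub p r i j *
        ((p : ℚ) ^ (1 - (r : ℤ)) * (-(p : ℚ) * r + r - 1) / (((p : ℚ) - 1) * r + p + 1) +
          ((p : ℚ) ^ (1 - (r : ℤ)) * ((p : ℚ) - 1) / (((p : ℚ) - 1) * r + p + 1)) *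
            (padicValNat p (j.1 : ℕ) : ℚ))
      = 1 := by
  have hp1 : (1 : ℚ) < (p : ℚ) := by exact_mod_cast hp.one_lt
  have hpne : (p : ℚ) ≠ 0 := by positivity
  have hpne1 : (p : ℚ) ≠ 1 := by linarith
  have hr1 : (1 : ℚ) ≤ (r : ℚ) := by exact_mod_cast hr
  have hD : ((p : ℚ) - 1) * r + p + 1 ≠ 0 := by nlinarith
  set a : ℚ := (p : ℚ) ^ (1 - (r : ℤ)) * (-(p : ℚ) * r + r - 1) / (((p : ℚ) - 1) * r + p + 1)
    with ha
  set b : ℚ := (p : ℚ) ^ (1 - (r : ℤ)) * ((p : ℚ) - 1) / (((p : ℚ) - 1) * r + p + 1) with hb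
  have hsplit : ∀ j : {i : Fin (p ^ r) // (i : ℕ) ≠ 0},
      MprSub p r i j * (a + b * (padicValNat p (j.1 : ℕ) : ℚ))
        = a * MprSub p r i j + b * (MprSub p r i j * (padicValNat p (j.1 : ℕ) : ℚ)) := by
    intro j; ring
  rw [Finset.sum_congr rfl (fun j _ => hsplit j), Finset.sum_add_distrib,
    ← Finset.mul_sum, ← Finset.mul_sum]
  rw [ROW1sub p r hp hr i]
  have hM : ∑ j : {i : Fin (p ^ r) // (i : ℕ) ≠ 0},
      MprSub p r i j * (padicValNat p (j.1 : ℕ) : ℚ)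
      = ((p : ℚ) ^ r - (p : ℚ) * ((p : ℚ) ^ padicValNat p (i.1 : ℕ)) ^ 2) / ((p : ℚ) - 1)
        - ((r : ℚ) - 1) * ((p : ℚ) ^ padicValNat p (i.1 : ℕ)) ^ 2 := by
    have h := sum_subtype_ne (p ^ r) (fun j => Mpr p r i.1 j * (padicValNat p (j : ℕ) : ℚ))
    rw [MprSub]
    simp only [Matrix.submatrix_apply]
    rw [h]
    have h0 : Mpr p r i.1 0 * (padicValNat p ((0 : Fin (p ^ r)) : ℕ) : ℚ) = 0 := by
      have : ((0 : Fin (p ^ r)) : ℕ) = 0 := rfl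
      rw [this]; simp
    rw [h0, sub_zero, ROW2 p r hp hr i.1 i.2]
  rw [hM]
  -- final algebra
  set v := padicValNat p (i.1 : ℕ) with hv
  have e0 : (p : ℚ) ^ (1 - (r : ℤ)) = (p : ℚ) * ((p : ℚ) ^ r)⁻¹ := by
    rw [zpow_sub₀ hpne, zpow_one, zpow_natCast, div_eq_mul_inv]
  have e1 : (p : ℚ) ^ (r - 1) = (p : ℚ) ^ r * (p : ℚ)⁻¹ := by
    rw [pow_sub₀ _ hpne hr, pow_one]
  have e3 : (p : ℚ) ^ (2 * v) = ((p : ℚ) ^ v) ^ 2 := by rw [mul_comm, pow_mul]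
  rw [ha, hb, e0, e1, e3]
  have hXne : (p : ℚ) ^ r ≠ 0 := pow_ne_zero _ hpne
  have hVne : (p : ℚ) ^ v ≠ 0 := pow_ne_zero _ hpne
  have hd1 : (p : ℚ) - 1 ≠ 0 := sub_ne_zero.2 hpne1
  field_simp
  rw [div_eq_iff (by rw [mul_comm]; exact hD)]
  ring

end Main

lemma unit (p r : ℕ) (hp : p.Prime) (hr : 1 ≤ r) [NeZero (p ^ r)] :
    IsUnit (MprSub p r) := by
  have hp0 : (0 : ℚ) < (p : ℚ) := by exact_mod_cast hp.pos
  have h1 : Pairwise fun i j : {i : Fin (p ^ r) // (i : ℕ) ≠ 0} =>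
      (-(MprSub p r)) i j < 0 := by
    intro i j hij
    have hvij : i.1 ≠ j.1 := fun h => hij (Subtype.ext h)
    simp only [Matrix.neg_apply, MprSub, Matrix.submatrix_apply, Mpr, if_neg hvij]
    rw [neg_lt_zero]
    positivity
  have h2 : ∀ i, 0 < ∑ j, (-(MprSub p r)) i j := by
    intro i
    simp only [Matrix.neg_apply]
    rw [Finset.sum_neg_distrib, ROW1sub p r hp hr i]
    have : (0:ℚ) < (p : ℚ) ^ (r - 1) + (p : ℚ) ^ (2 * padicValNat p (i.1 : ℕ)) := by positivity
    linarith
  have hdet : (-(MprSub p r)).det ≠ 0 := Matrix.det_ne_zero_of_sum_row_pos h1 h2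
  have hdet2 : (MprSub p r).det ≠ 0 := by
    intro h
    apply hdet
    rw [Matrix.det_neg, h, mul_zero]
  exact (Matrix.isUnit_iff_isUnit_det _).2 (isUnit_iff_ne_zero.2 hdet2)

lemma SNU (p r : ℕ) (hp : p.Prime) (hr : 1 ≤ r) [NeZero (p ^ r)] :
    ∑ i : Fin (p ^ r), (padicValNat p (i : ℕ) : ℚ)
      = ((p : ℚ) ^ r - (p : ℚ) ^ 1) / ((p : ℚ) - 1) - ((r : ℚ) - 1) := by
  have hp1 : (1 : ℚ) < (p : ℚ) := by exact_mod_cast hp.one_lt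
  have hpne1 : (p : ℚ) ≠ 1 := by linarith
  rw [← Finset.add_sum_erase Finset.univ _ (Finset.mem_univ (0 : Fin (p ^ r)))]
  have h0 : (padicValNat p ((0 : Fin (p ^ r)) : ℕ) : ℚ) = 0 := by
    have : ((0 : Fin (p ^ r)) : ℕ) = 0 := rfl
    rw [this]; simp
  rw [h0, zero_add]
  have hstep : ∀ j ∈ Finset.univ.erase (0 : Fin (p ^ r)),
      (padicValNat p (j : ℕ) : ℚ)
        = ∑ t ∈ Ico 1 r, (if (p : ℤ) ^ t ∣ ((j : ℕ) : ℤ) then (1 : ℚ) else 0) := by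
    intro j hj
    have hj0 : (j : ℕ) ≠ 0 := by
      simp only [Finset.mem_erase, Finset.mem_univ, and_true] at hj
      intro h
      exact hj (Fin.ext (by simpa using h))
    exact NU p r hp hj0 j.2
  rw [Finset.sum_congr rfl hstep, Finset.sum_comm]
  have hT : ∀ t ∈ Ico 1 r,
      ∑ j ∈ Finset.univ.erase (0 : Fin (p ^ r)),
          (if (p : ℤ) ^ t ∣ ((j : ℕ) : ℤ) then (1 : ℚ) else 0)
        = (p : ℚ) ^ (r - t) - 1 := by
    intro t ht
    simp only [Finset.mem_Ico] at ht
    rw [Finset.sum_erase_eq_sub (Finset.mem_univ (0 : Fin (p ^ r)))]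
    have hz : (((0 : Fin (p ^ r)) : ℕ) : ℤ) = 0 := by simp
    have h1 : (if (p : ℤ) ^ t ∣ (((0 : Fin (p ^ r)) : ℕ) : ℤ) then (1 : ℚ) else 0) = 1 := by
      rw [hz]; simp
    rw [h1]
    congr 1
    have h2 : ∀ j : Fin (p ^ r),
        (if (p : ℤ) ^ t ∣ ((j : ℕ) : ℤ) then (1 : ℚ) else 0)
          = (if (p : ℤ) ^ t ∣ ((0 : ℤ) - (j : ℤ)) then (1 : ℚ) else 0) := by
      intro j
      apply if_congr _ rfl rfl
      rw [zero_sub, dvd_neg]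
    rw [Finset.sum_congr rfl (fun j _ => h2 j), sum_ind_pow p r hp.pos (by omega : t ≤ r) 0]
  rw [Finset.sum_congr rfl hT, Finset.sum_sub_distrib, Finset.sum_const, Nat.card_Ico]
  rw [Finset.sum_Ico_reflect _ 1 (by omega : r ≤ r + 1)]
  have h3 : r + 1 - r = 1 := by omega
  have h4 : r + 1 - 1 = r := by omega
  rw [h3, h4, geom_sum_Ico hpne1 (by omega : 1 ≤ r)]
  have h5 : ((r - 1 : ℕ) : ℚ) = (r : ℚ) - 1 := by
    push_cast [Nat.cast_sub hr]
    ring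
  rw [nsmul_eq_mul, h5]
  ring

end Stmt14Aux

/-- Let `A' = (M(p^r)_{1̂,1̂})⁻¹`. For every `i ∈ {1, …, p^r−1}`, the `i`-th
row sum of `A'` equals
`p^{1−r}·(−pr + r − 1)/((p−1)r + p + 1) + (p^{1−r}·(p−1)/((p−1)r + p + 1))·ν_p(i)`, and the
sum of all entries of `A'` equals `−(p−1)·p·r/((p−1)r + p + 1)`. -/
theorem stmt14 (p r : ℕ) (hp : p.Prime) (hr : 1 ≤ r) :
    IsUnit (MprSub p r) ∧
    (∀ i : {i : Fin (p ^ r) // (i : ℕ) ≠ 0},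
      ∑ j : {i : Fin (p ^ r) // (i : ℕ) ≠ 0}, (MprSub p r)⁻¹ i j =
        (p : ℚ) ^ (1 - (r : ℤ)) * (-(p : ℚ) * r + r - 1) / (((p : ℚ) - 1) * r + p + 1) +
          ((p : ℚ) ^ (1 - (r : ℤ)) * ((p : ℚ) - 1) / (((p : ℚ) - 1) * r + p + 1)) *
            (padicValNat p (i.1 : ℕ) : ℚ)) ∧
    (∑ i : {i : Fin (p ^ r) // (i : ℕ) ≠ 0},
        ∑ j : {i : Fin (p ^ r) // (i : ℕ) ≠ 0}, (MprSub p r)⁻¹ i j =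
      -(((p : ℚ) - 1) * p * r) / (((p : ℚ) - 1) * r + p + 1)) := by
  haveI : NeZero (p ^ r) := ⟨(pow_pos hp.pos r).ne'⟩
  have hU := Stmt14Aux.unit p r hp hr
  have hdet : IsUnit (MprSub p r).det := (Matrix.isUnit_iff_isUnit_det _).1 hU
  set w : {i : Fin (p ^ r) // (i : ℕ) ≠ 0} → ℚ := fun j =>
    (p : ℚ) ^ (1 - (r : ℤ)) * (-(p : ℚ) * r + r - 1) / (((p : ℚ) - 1) * r + p + 1) +
      ((p : ℚ) ^ (1 - (r : ℤ)) * ((p : ℚ) - 1) / (((p : ℚ) - 1) * r + p + 1)) *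
        (padicValNat p (j.1 : ℕ) : ℚ) with hw
  have hBw : MprSub p r *ᵥ w = fun _ => (1 : ℚ) := by
    funext i
    exact Stmt14Aux.BV p r hp hr i
  have key : ∀ i, ∑ j, (MprSub p r)⁻¹ i j = w i := by
    intro i
    have h1 : (MprSub p r)⁻¹ *ᵥ (fun _ => (1 : ℚ)) = w := by
      rw [← hBw, Matrix.mulVec_mulVec, Matrix.nonsing_inv_mul _ hdet, Matrix.one_mulVec]
    calc ∑ j, (MprSub p r)⁻¹ i j
        = ((MprSub p r)⁻¹ *ᵥ (fun _ => (1 : ℚ))) i := by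
          simp [Matrix.mulVec, dotProduct]
      _ = w i := by rw [h1]
  refine ⟨hU, fun i => key i, ?_⟩
  rw [Finset.sum_congr rfl (fun i _ => key i)]
  -- now evaluate ∑ w
  have hsub := Stmt14Aux.sum_subtype_ne (p ^ r) (fun i : Fin (p ^ r) =>
    (p : ℚ) ^ (1 - (r : ℤ)) * (-(p : ℚ) * r + r - 1) / (((p : ℚ) - 1) * r + p + 1) +
      ((p : ℚ) ^ (1 - (r : ℤ)) * ((p : ℚ) - 1) / (((p : ℚ) - 1) * r + p + 1)) *
        (padicValNat p (i : ℕ) : ℚ))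
  rw [hw]
  rw [hsub]
  have h0 : ((0 : Fin (p ^ r)) : ℕ) = 0 := rfl
  rw [Finset.sum_add_distrib, Finset.sum_const, ← Finset.mul_sum, Stmt14Aux.SNU p r hp hr]
  simp only [h0, padicValNat.zero, Nat.cast_zero, mul_zero, add_zero]
  -- final algebra
  have hp1 : (1 : ℚ) < (p : ℚ) := by exact_mod_cast hp.one_lt
  have hpne : (p : ℚ) ≠ 0 := by positivity
  have hpne1 : (p : ℚ) ≠ 1 := by linarith
  have hr1 : (1 : ℚ) ≤ (r : ℚ) := by exact_mod_cast hr
  have hD : ((p : ℚ) - 1) * r + p + 1 ≠ 0 := by nlinarith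
  have e0 : (p : ℚ) ^ (1 - (r : ℤ)) = (p : ℚ) * ((p : ℚ) ^ r)⁻¹ := by
    rw [zpow_sub₀ hpne, zpow_one, zpow_natCast, div_eq_mul_inv]
  rw [Finset.card_univ, Fintype.card_fin, nsmul_eq_mul, e0]
  have hXne : (p : ℚ) ^ r ≠ 0 := pow_ne_zero _ hpne
  have hd1 : (p : ℚ) - 1 ≠ 0 := sub_ne_zero.2 hpne1
  push_cast
  field_simp
  ring
end

section
/- Let p be a prime and r ≥ 1 an integer. Then T₀ is invertible over ℚ, and its inverse has the following entries: (1) for rows and columns both in the first block, indexed by i, j ∈ {1, …, p^r−1}: if i = j the entry is −2p^{1−2r}(pr−r+1)/(p+1) + 2p^{1−2r}(p−1)·ν_p(i)/(p+1), and if i ≠ j the entry is −p^{1−2r}(pr−r+1)/(p+1) − (p^{1−2r}(p−1)/(p+1))·(ν_p(i−j) − ν_p(i) − ν_p(j)); (2) for a row in the first block indexed by i ∈ {1, …, p^r−1} and a column in the second block, the entry is −p^{1−2r}(pr−r+1)/(p+1) + p^{1−2r}(p−1)·ν_p(i)/(p+1); (3) for a row in the second block and a column in the first block indexed by j ∈ {1,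 …, p^r−1}, the entry is −p^{1−2r}(pr−r+1)/(p+1) + p^{1−2r}(p−1)·ν_p(j)/(p+1); (4) for rows and columns both in the second block, indexed by i, j ∈ {0, …, p^{r−1}−1}: if i = j the entry is −2p^{1−2r}(pr−r+1)/(p+1), and if i ≠ j the entry is −p^{1−2r}(pr+p−r)/(p+1) − p^{1−2r}(p−1)·ν_p(i−j)/(p+1). -/
open Finset

set_option linter.unusedSectionVars false
set_option maxHeartbeats 1000000

/-- `B`: the `p^{r−1} × p^{r−1}` matrix whose diagonal entries equal `−p^{2r−1}` and whose
off-diagonal `(i,j)` entries equal `p^{2ν_p(i−j)+2}`. -/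
def Bmat (p r : ℕ) : Matrix (Fin (p ^ (r - 1))) (Fin (p ^ (r - 1))) ℚ := fun i j =>
  if i = j then -(p : ℚ) ^ (2 * r - 1)
  else (p : ℚ) ^ (2 * padicValInt p ((i : ℤ) - (j : ℤ)) + 2)

/-- `T₀`: the block matrix `[[M(p^r)_{1̂,1̂}, 𝟏], [𝟏, B]]`, where `𝟏` denotes all-ones
blocks of the appropriate sizes. -/
def T0 (p r : ℕ) :
    Matrix ({i : Fin (p ^ r) // (i : ℕ) ≠ 0} ⊕ Fin (p ^ (r - 1)))
      ({i : Fin (p ^ r) // (i : ℕ) ≠ 0} ⊕ Fin (p ^ (r - 1))) ℚ :=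
  Matrix.fromBlocks (MprSub p r) (Matrix.of fun _ _ => 1) (Matrix.of fun _ _ => 1) (Bmat p r)




section Infra

variable (p : ℕ) [hp : Fact p.Prime]

private instance instNZ (N : ℕ) : NeZero (p ^ N) :=
  ⟨pow_ne_zero _ (Fact.out : p.Prime).ne_zero⟩

/-- valuation of a residue -/
def nuZ {M : ℕ} (x : ZMod M) : ℕ := padicValNat p x.val

/-- off-diagonal weight -/
noncomputable def uQ {M : ℕ} (x : ZMod M) : ℚ :=
  if x = 0 then 0 else (p : ℚ) ^ (2 * nuZ p x)

variable {p}

theorem nuZ_zero {M : ℕ} [NeZero M] : nuZ p (0 : ZMod M) = 0 := by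
  simp [nuZ, ZMod.val_zero]

theorem nuZ_intCast {N : ℕ} (z : ℤ) (hz : (z : ZMod (p ^ N)) ≠ 0) :
    nuZ p (z : ZMod (p ^ N)) = padicValInt p z := by
  have hzne : z ≠ 0 := by rintro rfl; simp at hz
  set w : ℕ := (z : ZMod (p ^ N)).val with hw
  have hwne : w ≠ 0 := fun h => hz ((ZMod.val_eq_zero _).mp h)
  have hcast : ((w : ℤ) : ZMod (p ^ N)) = (z : ZMod (p ^ N)) := by
    push_cast
    rw [hw, ZMod.natCast_zmod_val]
  have hdvd : ((p : ℤ) ^ N) ∣ z - (w : ℤ) := by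
    have : ((z - (w : ℤ) : ℤ) : ZMod (p ^ N)) = 0 := by push_cast [hcast]; ring
    rwa [ZMod.intCast_zmod_eq_zero_iff_dvd, Nat.cast_pow] at this
  have hna : z.natAbs ≠ 0 := Int.natAbs_ne_zero.mpr hzne
  have key : ∀ k : ℕ, k < N → ((p : ℤ) ^ k ∣ z ↔ (p : ℤ) ^ k ∣ (w : ℤ)) := by
    intro k hk
    have hdk : ((p : ℤ) ^ k) ∣ z - (w : ℤ) :=
      dvd_trans (pow_dvd_pow _ hk.le) hdvd
    constructor
    · intro h; have := dvd_sub h hdk; simpa using this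
    · intro h; have := dvd_add hdk h; simpa using this
  -- valuations are < N
  have hvz : padicValNat p z.natAbs < N := by
    by_contra hle
    push_neg at hle
    have : (p : ℕ) ^ N ∣ z.natAbs := (padicValNat_dvd_iff_le hna).mpr hle
    have h2 : ((p ^ N : ℕ) : ℤ) ∣ z := by
      have := Int.natCast_dvd_natCast.mpr this
      rwa [Int.dvd_natAbs] at this
    exact hz ((ZMod.intCast_zmod_eq_zero_iff_dvd z (p ^ N)).mpr (by exact_mod_cast h2))
  have hvw : padicValNat p w < N := by
    by_contra hle
    push_neg at hle
    have h1 : (p : ℕ) ^ N ∣ w := (padicValNat_dvd_iff_le hwne).mpr hle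
    have h2 : w < p ^ N := ZMod.val_lt _
    exact absurd (Nat.le_of_dvd (Nat.pos_of_ne_zero hwne) h1) (by omega)
  -- each valuation bounds the other
  have hd1 : (p : ℕ) ^ padicValNat p z.natAbs ∣ w := by
    have h0 : (p : ℤ) ^ padicValNat p z.natAbs ∣ z := by
      have h := Int.natCast_dvd_natCast.mpr (pow_padicValNat_dvd (p := p) (n := z.natAbs))
      rw [Int.dvd_natAbs] at h
      exact_mod_cast h
    have := (key _ hvz).mp h0
    exact_mod_cast this
  have hd2 : (p : ℕ) ^ padicValNat p w ∣ z.natAbs := by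
    have h0 : (p : ℤ) ^ padicValNat p w ∣ (w : ℤ) := by
      exact_mod_cast Int.natCast_dvd_natCast.mpr (pow_padicValNat_dvd (p := p) (n := w))
    have h1 := (key _ hvw).mpr h0
    rw [← Int.dvd_natAbs] at h1
    exact_mod_cast h1
  have e1 : padicValNat p z.natAbs ≤ padicValNat p w := (padicValNat_dvd_iff_le hwne).mp hd1
  have e2 : padicValNat p w ≤ padicValNat p z.natAbs := (padicValNat_dvd_iff_le hna).mp hd2
  show padicValNat p w = padicValNat p z.natAbs
  exact le_antisymm e2 e1


theorem nuZ_natAbs {N : ℕ} (z : ℤ) (hz : (z : ZMod (p ^ N)) ≠ 0) :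
    nuZ p (z : ZMod (p ^ N)) = padicValNat p z.natAbs :=
  nuZ_intCast z hz

theorem nuZ_neg {N : ℕ} (x : ZMod (p ^ N)) : nuZ p (-x) = nuZ p x := by
  rcases eq_or_ne x 0 with rfl | hx
  · simp
  · have hxc : ((x.val : ℤ) : ZMod (p ^ N)) = x := by push_cast; exact ZMod.natCast_zmod_val x
    have h1 : ((- (x.val : ℤ) : ℤ) : ZMod (p ^ N)) = -x := by push_cast [hxc]; ring
    have h2 : (-x : ZMod (p ^ N)) ≠ 0 := neg_ne_zero.mpr hx
    have h3 : ((x.val : ℤ) : ZMod (p ^ N)) ≠ 0 := by rw [hxc]; exact hx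
    calc nuZ p (-x) = padicValInt p (-(x.val : ℤ)) := by rw [← h1]; exact nuZ_intCast _ (h1 ▸ h2)
    _ = padicValInt p ((x.val : ℤ)) := by unfold padicValInt; rw [Int.natAbs_neg]
    _ = nuZ p ((x.val : ℤ) : ZMod (p ^ N)) := (nuZ_intCast _ h3).symm
    _ = nuZ p x := by rw [hxc]

theorem nuZ_eq_zero_of_not_dvd {M : ℕ} {x : ZMod M} (h : ¬ p ∣ x.val) : nuZ p x = 0 :=
  padicValNat.eq_zero_of_not_dvd h

theorem uQ_zero {M : ℕ} : uQ p (0 : ZMod M) = 0 := by simp [uQ]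

/-- the multiplication-by-p embedding -/
def iotaZ (N : ℕ) (x : ZMod (p ^ N)) : ZMod (p ^ (N + 1)) := ((p * x.val : ℕ) : ZMod (p ^ (N + 1)))

theorem val_iotaZ (N : ℕ) (x : ZMod (p ^ N)) : (iotaZ (p := p) N x).val = p * x.val := by
  apply ZMod.val_cast_of_lt
  have h1 : x.val < p ^ N := ZMod.val_lt x
  have hp0 : 0 < p := (Fact.out : p.Prime).pos
  calc p * x.val < p * p ^ N := by exact mul_lt_mul_of_pos_left h1 hp0
  _ = p ^ (N + 1) := by ring

theorem iotaZ_injective (N : ℕ) : Function.Injective (iotaZ (p := p) N) := by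
  intro a b h
  have := congrArg ZMod.val h
  rw [val_iotaZ, val_iotaZ] at this
  have hp0 : p ≠ 0 := (Fact.out : p.Prime).ne_zero
  exact ZMod.val_injective _ (Nat.eq_of_mul_eq_mul_left (Nat.pos_of_ne_zero hp0) this)

theorem iotaZ_eq_zero_iff (N : ℕ) (x : ZMod (p ^ N)) : iotaZ (p := p) N x = 0 ↔ x = 0 := by
  rw [← ZMod.val_eq_zero, val_iotaZ, ← ZMod.val_eq_zero]
  have hp0 : p ≠ 0 := (Fact.out : p.Prime).ne_zero
  simp [hp0]

theorem iotaZ_add (N : ℕ) (a b : ZMod (p ^ N)) :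
    iotaZ (p := p) N (a + b) = iotaZ (p := p) N a + iotaZ (p := p) N b := by
  unfold iotaZ
  rw [← Nat.cast_add, ZMod.natCast_eq_natCast_iff]
  have h : (a + b).val ≡ a.val + b.val [MOD p ^ N] := by
    rw [ZMod.val_add]; exact Nat.mod_modEq _ _
  have h2 := h.mul_left' (c := p)
  have hmod : p ^ (N + 1) = p * p ^ N := by ring
  rw [hmod, ← mul_add]
  exact h2
  
theorem iotaZ_sub (N : ℕ) (a b : ZMod (p ^ N)) :
    iotaZ (p := p) N (a - b) = iotaZ (p := p) N a - iotaZ (p := p) N b := by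
  have := iotaZ_add (p := p) N (a - b) b
  rw [sub_add_cancel] at this
  rw [this]; ring

theorem dvd_val_iotaZ (N : ℕ) (x : ZMod (p ^ N)) : p ∣ (iotaZ (p := p) N x).val := by
  rw [val_iotaZ]; exact Dvd.intro _ rfl

theorem exists_iotaZ_of_dvd (N : ℕ) (d : ZMod (p ^ (N + 1))) (h : p ∣ d.val) :
    ∃ x : ZMod (p ^ N), iotaZ (p := p) N x = d := by
  obtain ⟨c, hc⟩ := h
  have hclt : c < p ^ N := by
    have h1 : d.val < p ^ (N + 1) := ZMod.val_lt d
    have hp0 : 0 < p := (Fact.out : p.Prime).pos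
    by_contra hle
    push_neg at hle
    have : p * p ^ N ≤ p * c := Nat.mul_le_mul_left p hle
    have h2 : p ^ (N + 1) = p * p ^ N := by ring
    omega
  refine ⟨(c : ZMod (p ^ N)), ?_⟩
  apply ZMod.val_injective
  rw [val_iotaZ, ZMod.val_cast_of_lt hclt, ← hc]

theorem nuZ_iotaZ (N : ℕ) (x : ZMod (p ^ N)) (hx : x ≠ 0) :
    nuZ p (iotaZ (p := p) N x) = nuZ p x + 1 := by
  unfold nuZ
  rw [val_iotaZ]
  have hp0 : p ≠ 0 := (Fact.out : p.Prime).ne_zero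
  have hv : x.val ≠ 0 := fun h => hx ((ZMod.val_eq_zero _).mp h)
  rw [padicValNat.mul hp0 hv, padicValNat_self, add_comm]

theorem uQ_iotaZ (N : ℕ) (x : ZMod (p ^ N)) :
    uQ p (iotaZ (p := p) N x) = (p : ℚ) ^ 2 * uQ p x := by
  rcases eq_or_ne x 0 with rfl | hx
  · simp [uQ, iotaZ_eq_zero_iff]
  · rw [uQ, uQ, if_neg hx, if_neg ((not_iff_not.mpr (iotaZ_eq_zero_iff N x)).mpr hx),
      nuZ_iotaZ N x hx]
    rw [← pow_add]
    congr 1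
    ring

theorem dvd_val_add {M : ℕ} (hM : p ∣ M) (a b : ZMod M) [NeZero M]
    (ha : p ∣ a.val) (hb : p ∣ b.val) : p ∣ (a + b).val := by
  rw [ZMod.val_add]
  exact (Nat.dvd_mod_iff hM).mpr (Nat.dvd_add ha hb)


theorem uQ_coprime {M : ℕ} [NeZero M] {d : ZMod M} (h : ¬ p ∣ d.val) : uQ p d = 1 := by
  have hd0 : d ≠ 0 := by
    rintro rfl
    rw [ZMod.val_zero] at h
    exact h (dvd_zero p)
  rw [uQ, if_neg hd0, nuZ_eq_zero_of_not_dvd h]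
  norm_num

end Infra

section Sums

variable {p : ℕ} [hp : Fact p.Prime]

theorem sum_shift {M : ℕ} [NeZero M] (e : ZMod M) (f : ZMod M → ℚ) :
    ∑ d : ZMod M, f (e - d) = ∑ d : ZMod M, f d :=
  Fintype.sum_equiv (Equiv.subLeft e) _ _ (fun _ => rfl)

theorem sum_iota_eq_filter (N : ℕ) (g : ZMod (p ^ (N + 1)) → ℚ) :
    ∑ x : ZMod (p ^ N), g (iotaZ (p := p) N x)
      = ∑ d ∈ Finset.univ.filter (fun d : ZMod (p ^ (N + 1)) => p ∣ d.val), g d := by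
  apply Finset.sum_bij (fun (x : ZMod (p ^ N)) _ => iotaZ (p := p) N x)
  · intro a _
    simp only [Finset.mem_filter, Finset.mem_univ, true_and]
    exact dvd_val_iotaZ N a
  · intro a _ b _ h
    exact iotaZ_injective N h
  · intro d hd
    rw [Finset.mem_filter] at hd
    obtain ⟨x, hx⟩ := exists_iotaZ_of_dvd N d hd.2
    exact ⟨x, Finset.mem_univ x, hx⟩
  · intro x _
    rfl

theorem sum_split (N : ℕ) (g : ZMod (p ^ (N + 1)) → ℚ) :
    ∑ d : ZMod (p ^ (N + 1)), g d
      = (∑ d ∈ Finset.univ.filter (fun d : ZMod (p ^ (N + 1)) => ¬ p ∣ d.val), g d)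
        + ∑ x : ZMod (p ^ N), g (iotaZ (p := p) N x) := by
  rw [sum_iota_eq_filter N g]
  rw [← Finset.sum_filter_add_sum_filter_not Finset.univ (fun d : ZMod (p ^ (N + 1)) => p ∣ d.val) g]
  ring

theorem zmod_p0_eq_zero (x : ZMod (p ^ 0)) : x = 0 := by
  haveI : Subsingleton (ZMod (p ^ 0)) := by rw [pow_zero]; infer_instance
  exact Subsingleton.elim x 0

theorem sum_p0 (f : ZMod (p ^ 0) → ℚ) : (∑ x : ZMod (p ^ 0), f x) = f 0 := by
  calc ∑ x : ZMod (p ^ 0), f x = ∑ _x : ZMod (p ^ 0), f 0 :=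
        Finset.sum_congr rfl (fun x _ => by rw [zmod_p0_eq_zero x])
  _ = f 0 := by
        rw [Finset.sum_const, Finset.card_univ, ZMod.card, nsmul_eq_mul]
        norm_num

theorem sum_card_q (N : ℕ) : (∑ _x : ZMod (p ^ N), (1 : ℚ)) = (p : ℚ) ^ N := by
  rw [Finset.sum_const, Finset.card_univ, ZMod.card, nsmul_eq_mul]
  push_cast
  ring

theorem sum_one_coprime (N : ℕ) :
    (∑ _d ∈ Finset.univ.filter (fun d : ZMod (p ^ (N + 1)) => ¬ p ∣ d.val), (1 : ℚ))
      = (p : ℚ) ^ (N + 1) - (p : ℚ) ^ N := by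
  have h := sum_split (p := p) N (fun _ => (1 : ℚ))
  rw [sum_card_q, sum_card_q] at h
  linarith

theorem sum_ind_ne_zero (N : ℕ) :
    ∑ x : ZMod (p ^ N), (if x = 0 then (0 : ℚ) else 1) = (p : ℚ) ^ N - 1 := by
  have h : ∀ x : ZMod (p ^ N), (if x = 0 then (0 : ℚ) else 1)
      = 1 - (if x = 0 then 1 else 0) := by
    intro x; split <;> norm_num
  rw [Finset.sum_congr rfl (fun x _ => h x), Finset.sum_sub_distrib, sum_card_q,
    Finset.sum_ite_eq' Finset.univ (0 : ZMod (p ^ N)) (fun _ => (1 : ℚ)),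
    if_pos (Finset.mem_univ _)]

theorem sumV (N : ℕ) :
    ((p : ℚ) - 1) * ∑ d : ZMod (p ^ N), (nuZ p d : ℚ)
      = (p : ℚ) ^ N - 1 - (N : ℚ) * ((p : ℚ) - 1) := by
  induction N with
  | zero =>
      rw [sum_p0 (p := p) (fun d => (nuZ p d : ℚ))]
      rw [nuZ_zero]
      push_cast
      ring
  | succ N ih =>
      have hsplit := sum_split (p := p) N (fun d => (nuZ p d : ℚ))
      have h1 : (∑ d ∈ Finset.univ.filter (fun d : ZMod (p ^ (N + 1)) => ¬ p ∣ d.val),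
          ((nuZ p d : ℚ))) = 0 :=
        Finset.sum_eq_zero (fun d hd => by
          rw [Finset.mem_filter] at hd
          rw [nuZ_eq_zero_of_not_dvd hd.2]
          norm_num)
      have h2 : (∑ x : ZMod (p ^ N), ((nuZ p (iotaZ (p := p) N x) : ℚ)))
          = (∑ d : ZMod (p ^ N), (nuZ p d : ℚ)) + ((p : ℚ) ^ N - 1) := by
        rw [← sum_ind_ne_zero (p := p) N, ← Finset.sum_add_distrib]
        apply Finset.sum_congr rfl
        intro x _
        rcases eq_or_ne x 0 with rfl | hx
        · have h0 : iotaZ (p := p) N (0 : ZMod (p ^ N)) = 0 := (iotaZ_eq_zero_iff N 0).mpr rfl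
          rw [if_pos rfl, h0, nuZ_zero, nuZ_zero]
          norm_num
        · rw [if_neg hx, nuZ_iotaZ N x hx]
          push_cast
          ring
      rw [h1, h2] at hsplit
      have hN : ((N : ℚ) + 1) * ((p : ℚ) - 1) = (N : ℚ) * ((p : ℚ) - 1) + ((p : ℚ) - 1) := by ring
      push_cast
      linear_combination ((p : ℚ) - 1) * hsplit + ih

theorem sumA (N : ℕ) :
    (p : ℚ) * ∑ d : ZMod (p ^ N), uQ p d = (p : ℚ) ^ N * ((p : ℚ) ^ N - 1) := by
  induction N with
  | zero =>
      rw [sum_p0 (p := p) (uQ p), uQ_zero]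
      ring
  | succ N ih =>
      have hsplit := sum_split (p := p) N (uQ p)
      have h1 : (∑ d ∈ Finset.univ.filter (fun d : ZMod (p ^ (N + 1)) => ¬ p ∣ d.val), uQ p d)
          = (p : ℚ) ^ (N + 1) - (p : ℚ) ^ N := by
        rw [← sum_one_coprime (p := p) N]
        exact Finset.sum_congr rfl (fun d hd => by
          rw [Finset.mem_filter] at hd
          exact uQ_coprime hd.2)
      have h2 : (∑ x : ZMod (p ^ N), uQ p (iotaZ (p := p) N x))
          = (p : ℚ) ^ 2 * ∑ d : ZMod (p ^ N), uQ p d := by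
        rw [Finset.mul_sum]
        exact Finset.sum_congr rfl (fun x _ => uQ_iotaZ N x)
      rw [h1, h2] at hsplit
      linear_combination (p : ℚ) * hsplit + (p : ℚ) ^ 2 * ih

theorem nuZ_sub_iota_eq_zero (N : ℕ) (e : ZMod (p ^ (N + 1))) (he : ¬ p ∣ e.val)
    (x : ZMod (p ^ N)) : nuZ p (e - iotaZ (p := p) N x) = 0 := by
  apply nuZ_eq_zero_of_not_dvd
  intro hcon
  apply he
  have heq : e = (e - iotaZ (p := p) N x) + iotaZ (p := p) N x := by ring
  rw [heq]
  exact dvd_val_add (dvd_pow_self p (Nat.succ_ne_zero N)) _ _ hcon (dvd_val_iotaZ N x)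

theorem sumH (N : ℕ) (e' : ZMod (p ^ N)) :
    ∑ x : ZMod (p ^ N), (nuZ p (iotaZ (p := p) N e' - iotaZ (p := p) N x) : ℚ)
      = ((p : ℚ) ^ N - 1) + ∑ d : ZMod (p ^ N), (nuZ p d : ℚ) := by
  have h1 : ∀ x : ZMod (p ^ N), (nuZ p (iotaZ (p := p) N e' - iotaZ (p := p) N x) : ℚ)
      = (fun y : ZMod (p ^ N) => ((nuZ p (iotaZ (p := p) N y) : ℚ))) (e' - x) := by
    intro x
    simp only
    rw [← iotaZ_sub]
  rw [Finset.sum_congr rfl (fun x _ => h1 x),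
    sum_shift e' (fun y => ((nuZ p (iotaZ (p := p) N y) : ℚ)))]
  rw [← sum_ind_ne_zero (p := p) N, ← Finset.sum_add_distrib]
  apply Finset.sum_congr rfl
  intro y _
  rcases eq_or_ne y 0 with rfl | hy
  · have h0 : iotaZ (p := p) N (0 : ZMod (p ^ N)) = 0 := (iotaZ_eq_zero_iff N 0).mpr rfl
    rw [if_pos rfl, h0, nuZ_zero, nuZ_zero]
    norm_num
  · rw [nuZ_iotaZ N y hy, if_neg hy]
    push_cast
    ring


theorem sumF (N : ℕ) : ∀ e : ZMod (p ^ N),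
    (p : ℚ) * ((p : ℚ) - 1) * ∑ d : ZMod (p ^ N), uQ p d * (nuZ p (e - d) : ℚ)
      = if e = 0 then
          (p : ℚ) ^ N * (((N : ℚ) - 1) * (p : ℚ) ^ (N + 1) - (N : ℚ) * (p : ℚ) ^ N + (p : ℚ))
        else (p : ℚ) ^ (N + 1) - (p : ℚ) ^ (2 * nuZ p e + 1) * (1 + (N : ℚ) * ((p : ℚ) - 1))
             + (nuZ p e : ℚ) * ((p : ℚ) - 1) * (p : ℚ) ^ (2 * N) := by
  induction N with
  | zero =>
      intro e
      rw [zmod_p0_eq_zero e, if_pos rfl,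
        sum_p0 (p := p) (fun d => uQ p d * (nuZ p ((0 : ZMod (p ^ 0)) - d) : ℚ)), uQ_zero]
      push_cast
      ring
  | succ N ih =>
      intro e
      have hsplit := sum_split (p := p) N (fun d => uQ p d * (nuZ p (e - d) : ℚ))
      have hcop : (∑ d ∈ Finset.univ.filter (fun d : ZMod (p ^ (N + 1)) => ¬ p ∣ d.val),
            uQ p d * (nuZ p (e - d) : ℚ))
          = (∑ d ∈ Finset.univ.filter (fun d : ZMod (p ^ (N + 1)) => ¬ p ∣ d.val),
            (nuZ p (e - d) : ℚ)) :=
        Finset.sum_congr rfl (fun d hd => by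
          rw [Finset.mem_filter] at hd
          rw [uQ_coprime hd.2, one_mul])
      have hfil := Finset.sum_filter_add_sum_filter_not Finset.univ
        (fun d : ZMod (p ^ (N + 1)) => p ∣ d.val) (fun d => (nuZ p (e - d) : ℚ))
      have hshift := sum_shift e (fun y => (nuZ p y : ℚ))
      have hiotafil := (sum_iota_eq_filter (p := p) N (fun d => (nuZ p (e - d) : ℚ)))
      have hC2 : (∑ d ∈ Finset.univ.filter (fun d : ZMod (p ^ (N + 1)) => ¬ p ∣ d.val),
            (nuZ p (e - d) : ℚ))
          = (∑ d : ZMod (p ^ (N + 1)), (nuZ p d : ℚ))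
            - ∑ x : ZMod (p ^ N), (nuZ p (e - iotaZ (p := p) N x) : ℚ) := by
        rw [hiotafil]
        linarith [hfil, hshift]
      have hS : (∑ d : ZMod (p ^ (N + 1)), uQ p d * (nuZ p (e - d) : ℚ))
          = ((∑ d : ZMod (p ^ (N + 1)), (nuZ p d : ℚ))
              - ∑ x : ZMod (p ^ N), (nuZ p (e - iotaZ (p := p) N x) : ℚ))
            + ∑ x : ZMod (p ^ N),
                uQ p (iotaZ (p := p) N x) * (nuZ p (e - iotaZ (p := p) N x) : ℚ) := by
        rw [hsplit]
        rw [hcop, hC2]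
      have hV1 := sumV (p := p) (N + 1)
      have hV0 := sumV (p := p) N
      have hA := sumA (p := p) N
      by_cases he : p ∣ e.val
      · obtain ⟨e', rfl⟩ := exists_iotaZ_of_dvd N e he
        have hH := sumH (p := p) N e'
        have hio : (∑ x : ZMod (p ^ N),
              uQ p (iotaZ (p := p) N x)
                * (nuZ p (iotaZ (p := p) N e' - iotaZ (p := p) N x) : ℚ))
            = (p : ℚ) ^ 2 * ((∑ d : ZMod (p ^ N), uQ p d * (nuZ p (e' - d) : ℚ))
                + (∑ d : ZMod (p ^ N), uQ p d) - uQ p e') := by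
          have key : ∀ x : ZMod (p ^ N),
              uQ p (iotaZ (p := p) N x)
                * (nuZ p (iotaZ (p := p) N e' - iotaZ (p := p) N x) : ℚ)
              = (p : ℚ) ^ 2 * (uQ p x * (nuZ p (e' - x) : ℚ) + uQ p x
                  - (if x = e' then uQ p x else 0)) := by
            intro x
            rw [← iotaZ_sub, uQ_iotaZ]
            rcases eq_or_ne x e' with rfl | hxe
            · rw [if_pos rfl, sub_self, (iotaZ_eq_zero_iff N 0).mpr rfl, nuZ_zero, nuZ_zero]
              push_cast
              ring
            · have hsub : e' - x ≠ 0 := sub_ne_zero.mpr (Ne.symm hxe)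
              rw [nuZ_iotaZ N _ hsub, if_neg hxe]
              push_cast
              ring
          rw [Finset.sum_congr rfl (fun x _ => key x), ← Finset.mul_sum]
          congr 1
          rw [Finset.sum_sub_distrib, Finset.sum_add_distrib,
            Finset.sum_ite_eq' Finset.univ e' (fun x => uQ p x), if_pos (Finset.mem_univ _)]
        rcases eq_or_ne e' 0 with rfl | he'
        · have h0 : iotaZ (p := p) N (0 : ZMod (p ^ N)) = 0 := (iotaZ_eq_zero_iff N 0).mpr rfl
          rw [h0] at hS hH hio ⊢
          rw [if_pos rfl]
          have hih := ih 0
          rw [if_pos rfl] at hih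
          rw [uQ_zero] at hio
          push_cast at hih hV0 hV1 ⊢
          linear_combination ((p : ℚ) * ((p : ℚ) - 1)) * hS
            - ((p : ℚ) * ((p : ℚ) - 1)) * hH
            + ((p : ℚ) * ((p : ℚ) - 1)) * hio
            + (p : ℚ) * hV1 - (p : ℚ) * hV0 + (p : ℚ) ^ 2 * ((p : ℚ) - 1) * hA
            + (p : ℚ) ^ 2 * hih
        · have hie : iotaZ (p := p) N e' ≠ 0 := fun h => he' ((iotaZ_eq_zero_iff N e').mp h)
          rw [if_neg hie, nuZ_iotaZ N e' he']
          have hih := ih e'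
          rw [if_neg he'] at hih
          have huq : uQ p e' = (p : ℚ) ^ (2 * nuZ p e') := by rw [uQ, if_neg he']
          rw [huq] at hio
          push_cast at hih hV0 hV1 ⊢
          linear_combination ((p : ℚ) * ((p : ℚ) - 1)) * hS
            - ((p : ℚ) * ((p : ℚ) - 1)) * hH
            + ((p : ℚ) * ((p : ℚ) - 1)) * hio
            + (p : ℚ) * hV1 - (p : ℚ) * hV0 + (p : ℚ) ^ 2 * ((p : ℚ) - 1) * hA
            + (p : ℚ) ^ 2 * hih
      · have he0 : e ≠ 0 := by
          rintro rfl
          rw [ZMod.val_zero] at he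
          exact he (dvd_zero p)
        have hP0 : (∑ x : ZMod (p ^ N), (nuZ p (e - iotaZ (p := p) N x) : ℚ)) = 0 :=
          Finset.sum_eq_zero (fun x _ => by rw [nuZ_sub_iota_eq_zero N e he x]; norm_num)
        have hio0 : (∑ x : ZMod (p ^ N),
              uQ p (iotaZ (p := p) N x) * (nuZ p (e - iotaZ (p := p) N x) : ℚ)) = 0 :=
          Finset.sum_eq_zero (fun x _ => by rw [nuZ_sub_iota_eq_zero N e he x]; norm_num)
        rw [if_neg he0, nuZ_eq_zero_of_not_dvd he]
        rw [hP0, hio0] at hS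
        push_cast at hV1 ⊢
        linear_combination ((p : ℚ) * ((p : ℚ) - 1)) * hS + (p : ℚ) * hV1

end Sums


section Core

/-- unscaled inverse-entry constants -/
def C1 (p r' : ℕ) : ℚ := (p : ℚ) * (r' + 1) - (r' + 1) + 1
def C3 (p r' : ℕ) : ℚ := (p : ℚ) * (r' + 1) + p - (r' + 1)
def P21 (p r' : ℕ) : ℚ := (p : ℚ) ^ (2 * r' + 1)

def MMz (p r' : ℕ) (x y : ZMod (p ^ (r' + 1))) : ℚ :=
  if y = x then -(P21 p r') else (p : ℚ) ^ (2 * nuZ p (x - y))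
def BBz (p r' : ℕ) (x y : ZMod (p ^ r')) : ℚ :=
  if y = x then -(P21 p r') else (p : ℚ) ^ (2 * nuZ p (x - y) + 2)
def SllZ (p r' : ℕ) (x y : ZMod (p ^ (r' + 1))) : ℚ :=
  if x = y then -2 * C1 p r' + 2 * ((p : ℚ) - 1) * (nuZ p x : ℚ)
  else -C1 p r' - ((p : ℚ) - 1) * ((nuZ p (x - y) : ℚ) - (nuZ p x : ℚ) - (nuZ p y : ℚ))
def SlrZ (p r' : ℕ) (x : ZMod (p ^ (r' + 1))) : ℚ :=
  -C1 p r' + ((p : ℚ) - 1) * (nuZ p x : ℚ)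
def SrrZ (p r' : ℕ) (x y : ZMod (p ^ r')) : ℚ :=
  if x = y then -2 * C1 p r' else -C3 p r' - ((p : ℚ) - 1) * (nuZ p (x - y) : ℚ)

variable {p : ℕ} [hp : Fact p.Prime]

theorem sum_nu_shift (N : ℕ) (b : ZMod (p ^ N)) :
    (∑ k : ZMod (p ^ N), (nuZ p (k - b) : ℚ)) = ∑ k : ZMod (p ^ N), (nuZ p k : ℚ) := by
  have h1 : ∀ k : ZMod (p ^ N), (nuZ p (k - b) : ℚ) = (nuZ p (b - k) : ℚ) := by
    intro k
    rw [show (k - b : ZMod (p ^ N)) = -(b - k) by ring, nuZ_neg]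
  rw [Finset.sum_congr rfl (fun k _ => h1 k)]
  exact sum_shift b (fun y => (nuZ p y : ℚ))

theorem SllZ_zero_left (r' : ℕ) (b : ZMod (p ^ (r' + 1))) (hb : b ≠ 0) :
    SllZ p r' 0 b = -C1 p r' := by
  rw [SllZ, if_neg (fun h => hb h.symm), zero_sub, nuZ_neg, nuZ_zero]
  push_cast
  ring

theorem sum_SllZ (r' : ℕ) (b : ZMod (p ^ (r' + 1))) (hb : b ≠ 0) :
    (∑ k : ZMod (p ^ (r' + 1)), SllZ p r' k b)
      = (-C1 p r' + ((p : ℚ) - 1) * (nuZ p b : ℚ)) * (p : ℚ) ^ (r' + 1) - C1 p r' := by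
  have h1 : ∀ k : ZMod (p ^ (r' + 1)), SllZ p r' k b
      = ((-C1 p r' + ((p : ℚ) - 1) * (nuZ p b : ℚ))
          + ((p : ℚ) - 1) * (nuZ p k : ℚ) - ((p : ℚ) - 1) * (nuZ p (k - b) : ℚ))
        + (if k = b then -C1 p r' else 0) := by
    intro k
    rcases eq_or_ne k b with rfl | hkb
    · rw [SllZ, if_pos rfl, if_pos rfl, sub_self, nuZ_zero]
      push_cast
      ring
    · rw [SllZ, if_neg hkb, if_neg hkb]
      push_cast
      ring
  rw [Finset.sum_congr rfl (fun k _ => h1 k), Finset.sum_add_distrib,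
    Finset.sum_ite_eq' Finset.univ b (fun _ => -C1 p r'), if_pos (Finset.mem_univ _),
    Finset.sum_sub_distrib, Finset.sum_add_distrib, Finset.sum_const, Finset.card_univ,
    ZMod.card, ← Finset.mul_sum, ← Finset.mul_sum, sum_nu_shift]
  push_cast
  ring

theorem sum_BBz (r' : ℕ) (i : ZMod (p ^ r')) :
    (∑ k : ZMod (p ^ r'), BBz p r' i k)
      = (p : ℚ) ^ 2 * (∑ d : ZMod (p ^ r'), uQ p d) - P21 p r' := by
  have h1 : ∀ k : ZMod (p ^ r'), BBz p r' i k
      = (p : ℚ) ^ 2 * uQ p (i - k) + (if k = i then -(P21 p r') else 0) := by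
    intro k
    rcases eq_or_ne k i with rfl | hki
    · rw [BBz, if_pos rfl, sub_self, uQ_zero, if_pos rfl]
      ring
    · have hik : i - k ≠ 0 := sub_ne_zero.mpr (Ne.symm hki)
      rw [BBz, if_neg hki, uQ, if_neg hik, ← pow_add, if_neg hki]
      ring
  rw [Finset.sum_congr rfl (fun k _ => h1 k), Finset.sum_add_distrib,
    Finset.sum_ite_eq' Finset.univ i (fun _ => -(P21 p r')), if_pos (Finset.mem_univ _),
    ← Finset.mul_sum, sum_shift i (uQ p)]
  ring

theorem core_rl (r' : ℕ) (b : ZMod (p ^ (r' + 1))) (hb : b ≠ 0) (i : ZMod (p ^ r')) :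
    (∑ k : ZMod (p ^ (r' + 1)), SllZ p r' k b) - SllZ p r' 0 b
      + (∑ k : ZMod (p ^ r'), BBz p r' i k)
          * (-C1 p r' + ((p : ℚ) - 1) * (nuZ p b : ℚ)) = 0 := by
  have hpne : (p : ℚ) ≠ 0 := by
    exact_mod_cast (Fact.out : p.Prime).ne_zero
  apply mul_left_cancel₀ hpne
  rw [sum_SllZ r' b hb, SllZ_zero_left r' b hb, sum_BBz r' i]
  have hA := sumA (p := p) r'
  simp only [C1, P21]
  push_cast
  linear_combination ((p : ℚ) - 1) * (p : ℚ) ^ 2 * ((nuZ p b : ℚ)) * hA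
    - (p : ℚ) ^ 2 * ((p : ℚ) * ((r' : ℚ) + 1) - ((r' : ℚ) + 1) + 1) * hA

theorem MMz_zero_right (r' : ℕ) (a : ZMod (p ^ (r' + 1))) (ha : a ≠ 0) :
    MMz p r' a 0 = uQ p a := by
  rw [MMz, if_neg (fun h => ha h.symm), sub_zero, uQ, if_neg ha]

theorem SlrZ_zero (r' : ℕ) : SlrZ p r' 0 = -C1 p r' := by
  rw [SlrZ, nuZ_zero]
  push_cast
  ring

theorem sum_SrrZ (r' : ℕ) (b : ZMod (p ^ r')) :
    (∑ k : ZMod (p ^ r'), SrrZ p r' k b)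
      = -C3 p r' * (p : ℚ) ^ r'
        - ((p : ℚ) - 1) * (∑ k : ZMod (p ^ r'), (nuZ p k : ℚ))
        + (-2 * C1 p r' + C3 p r') := by
  have h1 : ∀ k : ZMod (p ^ r'), SrrZ p r' k b
      = (-C3 p r' - ((p : ℚ) - 1) * (nuZ p (k - b) : ℚ))
        + (if k = b then -2 * C1 p r' + C3 p r' else 0) := by
    intro k
    rcases eq_or_ne k b with rfl | hkb
    · rw [SrrZ, if_pos rfl, if_pos rfl, sub_self, nuZ_zero]
      push_cast
      ring
    · rw [SrrZ, if_neg hkb, if_neg hkb]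
      ring
  rw [Finset.sum_congr rfl (fun k _ => h1 k), Finset.sum_add_distrib,
    Finset.sum_ite_eq' Finset.univ b (fun _ => -2 * C1 p r' + C3 p r'),
    if_pos (Finset.mem_univ _), Finset.sum_sub_distrib, Finset.sum_const, Finset.card_univ,
    ZMod.card, ← Finset.mul_sum, sum_nu_shift]
  push_cast
  ring

theorem sum_SlrZ (r' : ℕ) :
    (∑ k : ZMod (p ^ (r' + 1)), SlrZ p r' k)
      = -C1 p r' * (p : ℚ) ^ (r' + 1)
        + ((p : ℚ) - 1) * (∑ k : ZMod (p ^ (r' + 1)), (nuZ p k : ℚ)) := by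
  simp only [SlrZ]
  rw [Finset.sum_add_distrib, Finset.sum_const, Finset.card_univ, ZMod.card,
    ← Finset.mul_sum]
  push_cast
  ring

theorem core_lr (r' : ℕ) (a : ZMod (p ^ (r' + 1))) (ha : a ≠ 0) (b : ZMod (p ^ r')) :
    (∑ k : ZMod (p ^ (r' + 1)), MMz p r' a k * SlrZ p r' k)
      - MMz p r' a 0 * SlrZ p r' 0
      + (∑ k : ZMod (p ^ r'), SrrZ p r' k b) = 0 := by
  have hppq : (p : ℚ) * ((p : ℚ) - 1) ≠ 0 := by
    have h1 : (p : ℚ) ≠ 0 := by exact_mod_cast (Fact.out : p.Prime).ne_zero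
    have h2 : (p : ℚ) - 1 ≠ 0 := by
      have := (Fact.out : p.Prime).two_le
      have : (2 : ℚ) ≤ (p : ℚ) := by exact_mod_cast this
      intro h
      nlinarith
    exact mul_ne_zero h1 h2
  have hmain : (∑ k : ZMod (p ^ (r' + 1)), MMz p r' a k * SlrZ p r' k)
      = -C1 p r' * (∑ d : ZMod (p ^ (r' + 1)), uQ p d)
        + ((p : ℚ) - 1) * (∑ d : ZMod (p ^ (r' + 1)), uQ p d * (nuZ p (a - d) : ℚ))
        + P21 p r' * (C1 p r' - ((p : ℚ) - 1) * (nuZ p a : ℚ)) := by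
    rw [← sum_shift a (fun k => MMz p r' a k * SlrZ p r' k)]
    have hpt : ∀ d : ZMod (p ^ (r' + 1)),
        MMz p r' a (a - d) * SlrZ p r' (a - d)
        = (-C1 p r' * uQ p d
            + ((p : ℚ) - 1) * (uQ p d * (nuZ p (a - d) : ℚ)))
          + (if d = 0 then P21 p r' * (C1 p r' - ((p : ℚ) - 1) * (nuZ p a : ℚ)) else 0) := by
      intro d
      rcases eq_or_ne d 0 with rfl | hd0
      · rw [if_pos rfl, sub_zero, MMz, if_pos rfl, uQ_zero, SlrZ]
        ring
      · rw [if_neg hd0, MMz, if_neg (fun h => hd0 ((sub_eq_self).mp h)), sub_sub_cancel,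
          uQ, if_neg hd0, SlrZ]
        ring
    rw [Finset.sum_congr rfl (fun d _ => hpt d), Finset.sum_add_distrib,
      Finset.sum_ite_eq' Finset.univ (0 : ZMod (p ^ (r' + 1))), if_pos (Finset.mem_univ _),
      Finset.sum_add_distrib, ← Finset.mul_sum, ← Finset.mul_sum]
  apply mul_left_cancel₀ hppq
  rw [hmain, MMz_zero_right r' a ha, SlrZ_zero, sum_SrrZ r' b]
  have hF := sumF (p := p) (r' + 1) a
  rw [if_neg ha] at hF
  have hA := sumA (p := p) (r' + 1)
  have hV := sumV (p := p) r'
  have huqa : uQ p a = (p : ℚ) ^ (2 * nuZ p a) := by rw [uQ, if_neg ha]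
  rw [huqa]
  simp only [C1, C3, P21]
  push_cast at hF hA hV ⊢
  linear_combination ((p : ℚ) - 1) * hF
    - ((p : ℚ) - 1) * ((p : ℚ) * ((r' : ℚ) + 1) - ((r' : ℚ) + 1) + 1) * hA
    - (p : ℚ) * ((p : ℚ) - 1) * hV

theorem core_rr (r' : ℕ) (i b : ZMod (p ^ r')) :
    (∑ k : ZMod (p ^ (r' + 1)), SlrZ p r' k) - SlrZ p r' 0
      + (∑ k : ZMod (p ^ r'), BBz p r' i k * SrrZ p r' k b)
      = if i = b then P21 p r' * ((p : ℚ) + 1) else 0 := by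
  have hppq : (p : ℚ) * ((p : ℚ) - 1) ≠ 0 := by
    have h1 : (p : ℚ) ≠ 0 := by exact_mod_cast (Fact.out : p.Prime).ne_zero
    have h2 : (p : ℚ) - 1 ≠ 0 := by
      have h3 : (2 : ℚ) ≤ (p : ℚ) := by exact_mod_cast (Fact.out : p.Prime).two_le
      intro h
      nlinarith
    exact mul_ne_zero h1 h2
  have hA := sumA (p := p) r'
  have hV := sumV (p := p) (r' + 1)
  rcases eq_or_ne i b with rfl | hib
  · rw [if_pos rfl]
    have hmain : (∑ k : ZMod (p ^ r'), BBz p r' i k * SrrZ p r' k i)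
        = -C3 p r' * (p : ℚ) ^ 2 * (∑ d : ZMod (p ^ r'), uQ p d)
          - ((p : ℚ) - 1) * (p : ℚ) ^ 2
              * (∑ d : ZMod (p ^ r'), uQ p d * (nuZ p ((0 : ZMod (p ^ r')) - d) : ℚ))
          + P21 p r' * (2 * C1 p r') := by
      rw [← sum_shift i (fun k => BBz p r' i k * SrrZ p r' k i)]
      have hpt : ∀ d : ZMod (p ^ r'),
          BBz p r' i (i - d) * SrrZ p r' (i - d) i
          = (-C3 p r' * (p : ℚ) ^ 2 * uQ p d
              - ((p : ℚ) - 1) * (p : ℚ) ^ 2 * (uQ p d * (nuZ p ((0 : ZMod (p ^ r')) - d) : ℚ)))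
            + (if d = 0 then P21 p r' * (2 * C1 p r') else 0) := by
        intro d
        rcases eq_or_ne d 0 with rfl | hd0
        · rw [if_pos rfl, sub_zero, BBz, if_pos rfl, uQ_zero, SrrZ, if_pos rfl]
          ring
        · have hksub : (i - d) - i = (0 : ZMod (p ^ r')) - d := by ring
          have huqd : uQ p d = (p : ℚ) ^ (2 * nuZ p d) := by rw [uQ, if_neg hd0]
          rw [if_neg hd0, BBz, if_neg (fun h => hd0 ((sub_eq_self).mp h)), sub_sub_cancel,
            SrrZ, if_neg (fun h => hd0 ((sub_eq_self).mp h)), hksub, huqd]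
          ring
      rw [Finset.sum_congr rfl (fun d _ => hpt d), Finset.sum_add_distrib,
        Finset.sum_ite_eq' Finset.univ (0 : ZMod (p ^ r')), if_pos (Finset.mem_univ _),
        Finset.sum_sub_distrib, ← Finset.mul_sum, ← Finset.mul_sum]
    apply mul_left_cancel₀ hppq
    rw [hmain, sum_SlrZ, SlrZ_zero]
    have hF := sumF (p := p) r' (0 : ZMod (p ^ r'))
    rw [if_pos rfl] at hF
    simp only [C1, C3, P21]
    push_cast at hF hA hV ⊢
    linear_combination (p : ℚ) * ((p : ℚ) - 1) * hV
      - (p : ℚ) ^ 2 * ((p : ℚ) - 1) * ((p : ℚ) * ((r' : ℚ) + 1) + (p : ℚ) - ((r' : ℚ) + 1)) * hA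
      - (p : ℚ) ^ 2 * ((p : ℚ) - 1) * hF
  · rw [if_neg hib]
    have hib' : i - b ≠ 0 := sub_ne_zero.mpr hib
    have hmain : (∑ k : ZMod (p ^ r'), BBz p r' i k * SrrZ p r' k b)
        = -C3 p r' * (p : ℚ) ^ 2 * (∑ d : ZMod (p ^ r'), uQ p d)
          - ((p : ℚ) - 1) * (p : ℚ) ^ 2
              * (∑ d : ZMod (p ^ r'), uQ p d * (nuZ p ((i - b) - d) : ℚ))
          + P21 p r' * (C3 p r' + ((p : ℚ) - 1) * (nuZ p (i - b) : ℚ))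
          + (p : ℚ) ^ 2 * (p : ℚ) ^ (2 * nuZ p (i - b)) * (-2 * C1 p r' + C3 p r') := by
      rw [← sum_shift i (fun k => BBz p r' i k * SrrZ p r' k b)]
      have hpt : ∀ d : ZMod (p ^ r'),
          BBz p r' i (i - d) * SrrZ p r' (i - d) b
          = (-C3 p r' * (p : ℚ) ^ 2 * uQ p d
              - ((p : ℚ) - 1) * (p : ℚ) ^ 2 * (uQ p d * (nuZ p ((i - b) - d) : ℚ)))
            + (if d = 0 then P21 p r' * (C3 p r' + ((p : ℚ) - 1) * (nuZ p (i - b) : ℚ)) else 0)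
            + (if d = i - b then
                (p : ℚ) ^ 2 * (p : ℚ) ^ (2 * nuZ p (i - b)) * (-2 * C1 p r' + C3 p r') else 0) := by
        intro d
        rcases eq_or_ne d 0 with rfl | hd0
        · rw [if_pos rfl, if_neg (fun h => hib (sub_eq_zero.mp h.symm)), sub_zero, BBz,
            if_pos rfl, uQ_zero, SrrZ, if_neg hib]
          ring
        · rcases eq_or_ne d (i - b) with rfl | hdib
          · have huq : uQ p (i - b) = (p : ℚ) ^ (2 * nuZ p (i - b)) := by
              rw [uQ, if_neg hd0]
            rw [if_neg hd0, if_pos rfl, sub_sub_cancel, BBz, if_neg (fun h => hib h.symm),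
              SrrZ, if_pos rfl, sub_self, nuZ_zero, huq]
            push_cast
            ring
          · have hkb : i - d ≠ b := fun h => hdib (by rw [← h]; ring)
            have hksub : (i - d) - b = (i - b) - d := by ring
            have huqd : uQ p d = (p : ℚ) ^ (2 * nuZ p d) := by rw [uQ, if_neg hd0]
            rw [if_neg hd0, if_neg hdib, BBz, if_neg (fun h => hd0 ((sub_eq_self).mp h)),
              sub_sub_cancel, SrrZ, if_neg hkb, hksub, huqd]
            ring
      rw [Finset.sum_congr rfl (fun d _ => hpt d), Finset.sum_add_distrib,
        Finset.sum_add_distrib,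
        Finset.sum_ite_eq' Finset.univ (0 : ZMod (p ^ r')), if_pos (Finset.mem_univ _),
        Finset.sum_ite_eq' Finset.univ (i - b), if_pos (Finset.mem_univ _),
        Finset.sum_sub_distrib, ← Finset.mul_sum, ← Finset.mul_sum]
    apply mul_left_cancel₀ hppq
    rw [hmain, sum_SlrZ, SlrZ_zero]
    have hF := sumF (p := p) r' (i - b)
    rw [if_neg hib'] at hF
    simp only [C1, C3, P21]
    push_cast at hF hA hV ⊢
    linear_combination (p : ℚ) * ((p : ℚ) - 1) * hV
      - (p : ℚ) ^ 2 * ((p : ℚ) - 1) * ((p : ℚ) * ((r' : ℚ) + 1) + (p : ℚ) - ((r' : ℚ) + 1)) * hA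
      - (p : ℚ) ^ 2 * ((p : ℚ) - 1) * hF

theorem core_ll (r' : ℕ) (a b : ZMod (p ^ (r' + 1))) (ha : a ≠ 0) (hb : b ≠ 0) :
    (∑ k : ZMod (p ^ (r' + 1)), MMz p r' a k * SllZ p r' k b)
      - MMz p r' a 0 * SllZ p r' 0 b
      + (p : ℚ) ^ r' * (-C1 p r' + ((p : ℚ) - 1) * (nuZ p b : ℚ))
      = if a = b then P21 p r' * ((p : ℚ) + 1) else 0 := by
  have hppq : (p : ℚ) * ((p : ℚ) - 1) ≠ 0 := by
    have h1 : (p : ℚ) ≠ 0 := by exact_mod_cast (Fact.out : p.Prime).ne_zero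
    have h2 : (p : ℚ) - 1 ≠ 0 := by
      have h3 : (2 : ℚ) ≤ (p : ℚ) := by exact_mod_cast (Fact.out : p.Prime).two_le
      intro h
      nlinarith
    exact mul_ne_zero h1 h2
  have hA := sumA (p := p) (r' + 1)
  have hF2 := sumF (p := p) (r' + 1) a
  rw [if_neg ha] at hF2
  have huqa : uQ p a = (p : ℚ) ^ (2 * nuZ p a) := by rw [uQ, if_neg ha]
  rcases eq_or_ne a b with rfl | hab
  · rw [if_pos rfl]
    have hmain : (∑ k : ZMod (p ^ (r' + 1)), MMz p r' a k * SllZ p r' k a)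
        = (-C1 p r' + ((p : ℚ) - 1) * (nuZ p a : ℚ))
            * (∑ d : ZMod (p ^ (r' + 1)), uQ p d)
          - ((p : ℚ) - 1)
              * (∑ d : ZMod (p ^ (r' + 1)), uQ p d * (nuZ p ((0 : ZMod (p ^ (r' + 1))) - d) : ℚ))
          + ((p : ℚ) - 1)
              * (∑ d : ZMod (p ^ (r' + 1)), uQ p d * (nuZ p (a - d) : ℚ))
          + P21 p r' * (2 * C1 p r' - 2 * ((p : ℚ) - 1) * (nuZ p a : ℚ)) := by
      rw [← sum_shift a (fun k => MMz p r' a k * SllZ p r' k a)]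
      have hpt : ∀ d : ZMod (p ^ (r' + 1)),
          MMz p r' a (a - d) * SllZ p r' (a - d) a
          = ((-C1 p r' + ((p : ℚ) - 1) * (nuZ p a : ℚ)) * uQ p d
              - ((p : ℚ) - 1) * (uQ p d * (nuZ p ((0 : ZMod (p ^ (r' + 1))) - d) : ℚ))
              + ((p : ℚ) - 1) * (uQ p d * (nuZ p (a - d) : ℚ)))
            + (if d = 0 then P21 p r' * (2 * C1 p r' - 2 * ((p : ℚ) - 1) * (nuZ p a : ℚ))
               else 0) := by
        intro d
        rcases eq_or_ne d 0 with rfl | hd0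
        · rw [if_pos rfl, sub_zero, MMz, if_pos rfl, uQ_zero, SllZ, if_pos rfl]
          ring
        · have hksub : (a - d) - a = (0 : ZMod (p ^ (r' + 1))) - d := by ring
          have huqd : uQ p d = (p : ℚ) ^ (2 * nuZ p d) := by rw [uQ, if_neg hd0]
          rw [if_neg hd0, MMz, if_neg (fun h => hd0 ((sub_eq_self).mp h)), sub_sub_cancel,
            SllZ, if_neg (fun h => hd0 ((sub_eq_self).mp h)), hksub, huqd]
          ring
      rw [Finset.sum_congr rfl (fun d _ => hpt d), Finset.sum_add_distrib,
        Finset.sum_ite_eq' Finset.univ (0 : ZMod (p ^ (r' + 1))), if_pos (Finset.mem_univ _),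
        Finset.sum_add_distrib, Finset.sum_sub_distrib, ← Finset.mul_sum, ← Finset.mul_sum,
        ← Finset.mul_sum]
    have hF0 := sumF (p := p) (r' + 1) (0 : ZMod (p ^ (r' + 1)))
    rw [if_pos rfl] at hF0
    apply mul_left_cancel₀ hppq
    rw [hmain, MMz_zero_right r' a ha, SllZ_zero_left r' a ha, huqa]
    simp only [C1, P21]
    push_cast at hF0 hF2 hA ⊢
    linear_combination ((p : ℚ) - 1)
        * (-((p : ℚ) * ((r' : ℚ) + 1) - ((r' : ℚ) + 1) + 1)
            + ((p : ℚ) - 1) * (nuZ p a : ℚ)) * hA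
      - ((p : ℚ) - 1) * hF0 + ((p : ℚ) - 1) * hF2
  · rw [if_neg hab]
    have hab' : a - b ≠ 0 := sub_ne_zero.mpr hab
    have huqab : uQ p (a - b) = (p : ℚ) ^ (2 * nuZ p (a - b)) := by rw [uQ, if_neg hab']
    have hmain : (∑ k : ZMod (p ^ (r' + 1)), MMz p r' a k * SllZ p r' k b)
        = (-C1 p r' + ((p : ℚ) - 1) * (nuZ p b : ℚ))
            * (∑ d : ZMod (p ^ (r' + 1)), uQ p d)
          - ((p : ℚ) - 1)
              * (∑ d : ZMod (p ^ (r' + 1)), uQ p d * (nuZ p ((a - b) - d) : ℚ))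
          + ((p : ℚ) - 1)
              * (∑ d : ZMod (p ^ (r' + 1)), uQ p d * (nuZ p (a - d) : ℚ))
          + P21 p r' * (C1 p r'
              + ((p : ℚ) - 1) * ((nuZ p (a - b) : ℚ) - (nuZ p a : ℚ) - (nuZ p b : ℚ)))
          + (p : ℚ) ^ (2 * nuZ p (a - b)) * (-C1 p r') := by
      rw [← sum_shift a (fun k => MMz p r' a k * SllZ p r' k b)]
      have hpt : ∀ d : ZMod (p ^ (r' + 1)),
          MMz p r' a (a - d) * SllZ p r' (a - d) b
          = ((-C1 p r' + ((p : ℚ) - 1) * (nuZ p b : ℚ)) * uQ p d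
              - ((p : ℚ) - 1) * (uQ p d * (nuZ p ((a - b) - d) : ℚ))
              + ((p : ℚ) - 1) * (uQ p d * (nuZ p (a - d) : ℚ)))
            + (if d = 0 then P21 p r' * (C1 p r'
                + ((p : ℚ) - 1) * ((nuZ p (a - b) : ℚ) - (nuZ p a : ℚ) - (nuZ p b : ℚ)))
               else 0)
            + (if d = a - b then (p : ℚ) ^ (2 * nuZ p (a - b)) * (-C1 p r') else 0) := by
        intro d
        rcases eq_or_ne d 0 with rfl | hd0
        · rw [if_pos rfl, if_neg (fun h => hab' h.symm), sub_zero, MMz, if_pos rfl, uQ_zero,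
            SllZ, if_neg hab]
          ring
        · rcases eq_or_ne d (a - b) with rfl | hdab
          · rw [if_neg hd0, if_pos rfl, sub_sub_cancel, MMz, if_neg (fun h => hab h.symm),
              SllZ, if_pos rfl, sub_self, nuZ_zero, huqab]
            push_cast
            ring
          · have hkb : a - d ≠ b := fun h => hdab (by rw [← h]; ring)
            have hksub : (a - d) - b = (a - b) - d := by ring
            have huqd : uQ p d = (p : ℚ) ^ (2 * nuZ p d) := by rw [uQ, if_neg hd0]
            rw [if_neg hd0, if_neg hdab, MMz, if_neg (fun h => hd0 ((sub_eq_self).mp h)),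
              sub_sub_cancel, SllZ, if_neg hkb, hksub, huqd]
            ring
      rw [Finset.sum_congr rfl (fun d _ => hpt d), Finset.sum_add_distrib,
        Finset.sum_add_distrib,
        Finset.sum_ite_eq' Finset.univ (0 : ZMod (p ^ (r' + 1))), if_pos (Finset.mem_univ _),
        Finset.sum_ite_eq' Finset.univ (a - b), if_pos (Finset.mem_univ _),
        Finset.sum_add_distrib, Finset.sum_sub_distrib, ← Finset.mul_sum, ← Finset.mul_sum,
        ← Finset.mul_sum]
    have hF1 := sumF (p := p) (r' + 1) (a - b)
    rw [if_neg hab'] at hF1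
    apply mul_left_cancel₀ hppq
    rw [hmain, MMz_zero_right r' a ha, SllZ_zero_left r' b hb, huqa]
    simp only [C1, P21]
    push_cast at hF1 hF2 hA ⊢
    linear_combination ((p : ℚ) - 1)
        * (-((p : ℚ) * ((r' : ℚ) + 1) - ((r' : ℚ) + 1) + 1)
            + ((p : ℚ) - 1) * (nuZ p b : ℚ)) * hA
      - ((p : ℚ) - 1) * hF1 + ((p : ℚ) - 1) * hF2

end Core


section Trans

def zk (p N : ℕ) (x : Fin (p ^ N)) : ZMod (p ^ N) := ((x : ℕ) : ZMod (p ^ N))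

variable {p : ℕ} [hp : Fact p.Prime]

theorem zk_val (N : ℕ) (x : Fin (p ^ N)) : (zk p N x).val = (x : ℕ) :=
  ZMod.val_cast_of_lt x.isLt

theorem zk_inj (N : ℕ) : Function.Injective (zk p N) := by
  intro x y h
  have := congrArg ZMod.val h
  rw [zk_val, zk_val] at this
  exact Fin.ext this

theorem zk_bij (N : ℕ) : Function.Bijective (zk p N) := by
  rw [Fintype.bijective_iff_injective_and_card]
  exact ⟨zk_inj N, by rw [Fintype.card_fin, ZMod.card]⟩

theorem zk_zero (N : ℕ) : zk p N 0 = 0 := by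
  rw [zk, Fin.val_zero, Nat.cast_zero]

theorem zk_ne_zero (N : ℕ) (x : Fin (p ^ N)) (hx : (x : ℕ) ≠ 0) : zk p N x ≠ 0 := by
  intro h
  exact hx (by rw [← zk_val (p := p) N x, h, ZMod.val_zero])

theorem sum_fin_zmod (N : ℕ) (g : ZMod (p ^ N) → ℚ) :
    (∑ k : Fin (p ^ N), g (zk p N k)) = ∑ x : ZMod (p ^ N), g x :=
  Fintype.sum_bijective (zk p N) (zk_bij N) _ _ (fun _ => rfl)

theorem sum_subtype_ne (N : ℕ) (f : Fin (p ^ N) → ℚ) :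
    (∑ k : {i : Fin (p ^ N) // (i : ℕ) ≠ 0}, f k.1)
      = (∑ k : Fin (p ^ N), f k) - f 0 := by
  have h1 : (∑ k ∈ Finset.univ.erase (0 : Fin (p ^ N)), f k)
      = ∑ k : {i : Fin (p ^ N) // (i : ℕ) ≠ 0}, f k.1 := by
    apply Finset.sum_subtype
    intro x
    simp only [Finset.mem_erase, Finset.mem_univ, and_true, Ne, Fin.ext_iff, Fin.val_zero]
  have h2 := Finset.sum_erase_add Finset.univ f (Finset.mem_univ (0 : Fin (p ^ N)))
  rw [← h1]
  linarith
 
theorem nuZ_zk (N : ℕ) (x : Fin (p ^ N)) : nuZ p (zk p N x) = padicValNat p (x : ℕ) := by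
  rw [nuZ, zk_val]

theorem nuZ_zk_sub (N : ℕ) (x y : Fin (p ^ N)) (hxy : x ≠ y) :
    nuZ p (zk p N x - zk p N y) = padicValInt p ((x : ℤ) - (y : ℤ)) := by
  have hcast : (((x : ℤ) - (y : ℤ) : ℤ) : ZMod (p ^ N)) = zk p N x - zk p N y := by
    push_cast
    rfl
  have hne : zk p N x - zk p N y ≠ 0 := sub_ne_zero.mpr (fun h => hxy (zk_inj N h))
  rw [← hcast]
  exact nuZ_intCast _ (by rw [hcast]; exact hne)

theorem hMpr (r' : ℕ) (x y : Fin (p ^ (r' + 1))) :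
    Mpr p (r' + 1) x y = MMz p r' (zk p (r' + 1) x) (zk p (r' + 1) y) := by
  rcases eq_or_ne x y with rfl | hxy
  · rw [Mpr, if_pos rfl, MMz, if_pos rfl, P21]
    have h : 2 * (r' + 1) - 1 = 2 * r' + 1 := by omega
    rw [h]
  · rw [Mpr, if_neg hxy, MMz, if_neg (fun h => hxy ((zk_inj (r' + 1) h).symm)),
      nuZ_zk_sub (r' + 1) x y hxy]

theorem hBmat (r' : ℕ) (x y : Fin (p ^ r')) :
    Bmat p (r' + 1) x y = BBz p r' (zk p r' x) (zk p r' y) := by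
  rcases eq_or_ne x y with rfl | hxy
  · rw [Bmat, if_pos rfl, BBz, if_pos rfl, P21]
    have h : 2 * (r' + 1) - 1 = 2 * r' + 1 := by omega
    rw [h]
  · rw [Bmat, if_neg hxy, BBz, if_neg (fun h => hxy ((zk_inj r' h).symm)),
      nuZ_zk_sub r' x y hxy]

/-- candidate inverse matrix -/
noncomputable def Smat (p r' : ℕ) :
    Matrix ({i : Fin (p ^ (r' + 1)) // (i : ℕ) ≠ 0} ⊕ Fin (p ^ r'))
      ({i : Fin (p ^ (r' + 1)) // (i : ℕ) ≠ 0} ⊕ Fin (p ^ r')) ℚ := fun x y =>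
  (P21 p r' * ((p : ℚ) + 1))⁻¹ *
    match x, y with
    | .inl i, .inl j => SllZ p r' (zk p (r' + 1) i.1) (zk p (r' + 1) j.1)
    | .inl i, .inr _ => SlrZ p r' (zk p (r' + 1) i.1)
    | .inr _, .inl j => SlrZ p r' (zk p (r' + 1) j.1)
    | .inr i, .inr j => SrrZ p r' (zk p r' i) (zk p r' j)

theorem P21_pos (p r' : ℕ) [Fact p.Prime] : (0 : ℚ) < P21 p r' * ((p : ℚ) + 1) := by
  have h1 : (0 : ℚ) < (p : ℚ) := by
    exact_mod_cast (Fact.out : p.Prime).pos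
  have h2 : (0 : ℚ) < P21 p r' := by
    rw [P21]
    positivity
  nlinarith

theorem main_inv (p r' : ℕ) [Fact p.Prime] :
    (show Matrix ({i : Fin (p ^ (r' + 1)) // (i : ℕ) ≠ 0} ⊕ Fin (p ^ r'))
        ({i : Fin (p ^ (r' + 1)) // (i : ℕ) ≠ 0} ⊕ Fin (p ^ r')) ℚ from T0 p (r' + 1))
      * Smat p r' = 1 := by
  have hscale : (P21 p r' * ((p : ℚ) + 1))⁻¹ * (P21 p r' * ((p : ℚ) + 1)) = 1 :=
    inv_mul_cancel₀ (ne_of_gt (P21_pos p r'))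
  ext x y
  rw [Matrix.mul_apply, Fintype.sum_sum_type]
  cases x with
  | inl a =>
    cases y with
    | inl b =>
      have hcore := core_ll (p := p) r' (zk p (r' + 1) a.1) (zk p (r' + 1) b.1)
        (zk_ne_zero (r' + 1) a.1 a.2) (zk_ne_zero (r' + 1) b.1 b.2)
      have h1 : (∑ k : {i : Fin (p ^ (r' + 1)) // (i : ℕ) ≠ 0},
            T0 p (r' + 1) (Sum.inl a) (Sum.inl k) * Smat p r' (Sum.inl k) (Sum.inl b))
          = (P21 p r' * ((p : ℚ) + 1))⁻¹ *
            ((∑ x : ZMod (p ^ (r' + 1)),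
                MMz p r' (zk p (r' + 1) a.1) x * SllZ p r' x (zk p (r' + 1) b.1))
              - MMz p r' (zk p (r' + 1) a.1) 0 * SllZ p r' 0 (zk p (r' + 1) b.1)) := by
        have hterm : ∀ k : {i : Fin (p ^ (r' + 1)) // (i : ℕ) ≠ 0},
            T0 p (r' + 1) (Sum.inl a) (Sum.inl k) * Smat p r' (Sum.inl k) (Sum.inl b)
            = (fun k : Fin (p ^ (r' + 1)) => (P21 p r' * ((p : ℚ) + 1))⁻¹ *
                (MMz p r' (zk p (r' + 1) a.1) (zk p (r' + 1) k)
                  * SllZ p r' (zk p (r' + 1) k) (zk p (r' + 1) b.1))) k.1 := by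
          intro k
          show MprSub p (r' + 1) a k * _ = _
          rw [MprSub, Matrix.submatrix_apply, hMpr r' a.1 k.1, Smat]
          ring
        rw [Finset.sum_congr rfl (fun k _ => hterm k),
          sum_subtype_ne (r' + 1) (fun k : Fin (p ^ (r' + 1)) => (P21 p r' * ((p : ℚ) + 1))⁻¹ *
            (MMz p r' (zk p (r' + 1) a.1) (zk p (r' + 1) k)
              * SllZ p r' (zk p (r' + 1) k) (zk p (r' + 1) b.1))),
          sum_fin_zmod (r' + 1) (fun x => (P21 p r' * ((p : ℚ) + 1))⁻¹ *
            (MMz p r' (zk p (r' + 1) a.1) x * SllZ p r' x (zk p (r' + 1) b.1))),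
          zk_zero, ← Finset.mul_sum]
        ring
      have h2 : (∑ k : Fin (p ^ r'),
            T0 p (r' + 1) (Sum.inl a) (Sum.inr k) * Smat p r' (Sum.inr k) (Sum.inl b))
          = (P21 p r' * ((p : ℚ) + 1))⁻¹ *
            ((p : ℚ) ^ r' * SlrZ p r' (zk p (r' + 1) b.1)) := by
        have hterm : ∀ k : Fin (p ^ r'),
            T0 p (r' + 1) (Sum.inl a) (Sum.inr k) * Smat p r' (Sum.inr k) (Sum.inl b)
            = (P21 p r' * ((p : ℚ) + 1))⁻¹ * SlrZ p r' (zk p (r' + 1) b.1) := by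
          intro k
          show (1 : ℚ) * _ = _
          rw [Smat]
          ring
        rw [Finset.sum_congr rfl (fun k _ => hterm k), Finset.sum_const, Finset.card_univ,
          Fintype.card_fin, nsmul_eq_mul]
        push_cast
        ring
      rw [h1, h2, Matrix.one_apply]
      have hrw : SlrZ p r' (zk p (r' + 1) b.1)
          = -C1 p r' + ((p : ℚ) - 1) * (nuZ p (zk p (r' + 1) b.1) : ℚ) := rfl
      rw [hrw]
      have heq : (Sum.inl a = (Sum.inl b : _ ⊕ Fin (p ^ r')))
          ↔ zk p (r' + 1) a.1 = zk p (r' + 1) b.1 := by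
        constructor
        · intro h; rw [Sum.inl.injEq] at h; rw [h]
        · intro h; rw [Sum.inl.injEq]; exact Subtype.ext (zk_inj (r' + 1) h)
      rcases eq_or_ne (zk p (r' + 1) a.1) (zk p (r' + 1) b.1) with hz | hz
      · rw [if_pos (heq.mpr hz)]
        rw [if_pos hz] at hcore
        linear_combination (P21 p r' * ((p : ℚ) + 1))⁻¹ * hcore + hscale
      · rw [if_neg (fun h => hz (heq.mp h))]
        rw [if_neg hz] at hcore
        linear_combination (P21 p r' * ((p : ℚ) + 1))⁻¹ * hcore
    | inr b =>
      have hcore := core_lr (p := p) r' (zk p (r' + 1) a.1)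
        (zk_ne_zero (r' + 1) a.1 a.2) (zk p r' b)
      have h1 : (∑ k : {i : Fin (p ^ (r' + 1)) // (i : ℕ) ≠ 0},
            T0 p (r' + 1) (Sum.inl a) (Sum.inl k) * Smat p r' (Sum.inl k) (Sum.inr b))
          = (P21 p r' * ((p : ℚ) + 1))⁻¹ *
            ((∑ x : ZMod (p ^ (r' + 1)), MMz p r' (zk p (r' + 1) a.1) x * SlrZ p r' x)
              - MMz p r' (zk p (r' + 1) a.1) 0 * SlrZ p r' 0) := by
        have hterm : ∀ k : {i : Fin (p ^ (r' + 1)) // (i : ℕ) ≠ 0},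
            T0 p (r' + 1) (Sum.inl a) (Sum.inl k) * Smat p r' (Sum.inl k) (Sum.inr b)
            = (fun k : Fin (p ^ (r' + 1)) => (P21 p r' * ((p : ℚ) + 1))⁻¹ *
                (MMz p r' (zk p (r' + 1) a.1) (zk p (r' + 1) k) * SlrZ p r' (zk p (r' + 1) k))) k.1 := by
          intro k
          show MprSub p (r' + 1) a k * _ = _
          rw [MprSub, Matrix.submatrix_apply, hMpr r' a.1 k.1, Smat]
          ring
        rw [Finset.sum_congr rfl (fun k _ => hterm k),
          sum_subtype_ne (r' + 1) (fun k : Fin (p ^ (r' + 1)) => (P21 p r' * ((p : ℚ) + 1))⁻¹ *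
            (MMz p r' (zk p (r' + 1) a.1) (zk p (r' + 1) k) * SlrZ p r' (zk p (r' + 1) k))),
          sum_fin_zmod (r' + 1) (fun x => (P21 p r' * ((p : ℚ) + 1))⁻¹ *
            (MMz p r' (zk p (r' + 1) a.1) x * SlrZ p r' x)),
          zk_zero, ← Finset.mul_sum]
        ring
      have h2 : (∑ k : Fin (p ^ r'),
            T0 p (r' + 1) (Sum.inl a) (Sum.inr k) * Smat p r' (Sum.inr k) (Sum.inr b))
          = (P21 p r' * ((p : ℚ) + 1))⁻¹ *
            (∑ x : ZMod (p ^ r'), SrrZ p r' x (zk p r' b)) := by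
        have hterm : ∀ k : Fin (p ^ r'),
            T0 p (r' + 1) (Sum.inl a) (Sum.inr k) * Smat p r' (Sum.inr k) (Sum.inr b)
            = (fun x : Fin (p ^ r') => (P21 p r' * ((p : ℚ) + 1))⁻¹ *
                SrrZ p r' (zk p r' x) (zk p r' b)) k := by
          intro k
          show (1 : ℚ) * _ = _
          rw [Smat]
          ring
        rw [Finset.sum_congr rfl (fun k _ => hterm k),
          sum_fin_zmod r' (fun x => (P21 p r' * ((p : ℚ) + 1))⁻¹ * SrrZ p r' x (zk p r' b)),
          Finset.mul_sum]
      rw [h1, h2, Matrix.one_apply, if_neg (by simp)]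
      linear_combination (P21 p r' * ((p : ℚ) + 1))⁻¹ * hcore
  | inr a =>
    cases y with
    | inl b =>
      have hcore := core_rl (p := p) r' (zk p (r' + 1) b.1)
        (zk_ne_zero (r' + 1) b.1 b.2) (zk p r' a)
      have h1 : (∑ k : {i : Fin (p ^ (r' + 1)) // (i : ℕ) ≠ 0},
            T0 p (r' + 1) (Sum.inr a) (Sum.inl k) * Smat p r' (Sum.inl k) (Sum.inl b))
          = (P21 p r' * ((p : ℚ) + 1))⁻¹ *
            ((∑ x : ZMod (p ^ (r' + 1)), SllZ p r' x (zk p (r' + 1) b.1))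
              - SllZ p r' 0 (zk p (r' + 1) b.1)) := by
        have hterm : ∀ k : {i : Fin (p ^ (r' + 1)) // (i : ℕ) ≠ 0},
            T0 p (r' + 1) (Sum.inr a) (Sum.inl k) * Smat p r' (Sum.inl k) (Sum.inl b)
            = (fun k : Fin (p ^ (r' + 1)) => (P21 p r' * ((p : ℚ) + 1))⁻¹ *
                SllZ p r' (zk p (r' + 1) k) (zk p (r' + 1) b.1)) k.1 := by
          intro k
          show (1 : ℚ) * _ = _
          rw [Smat]
          ring
        rw [Finset.sum_congr rfl (fun k _ => hterm k),
          sum_subtype_ne (r' + 1) (fun k : Fin (p ^ (r' + 1)) => (P21 p r' * ((p : ℚ) + 1))⁻¹ *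
            SllZ p r' (zk p (r' + 1) k) (zk p (r' + 1) b.1)),
          sum_fin_zmod (r' + 1) (fun x => (P21 p r' * ((p : ℚ) + 1))⁻¹ *
            SllZ p r' x (zk p (r' + 1) b.1)),
          zk_zero, ← Finset.mul_sum]
        ring
      have h2 : (∑ k : Fin (p ^ r'),
            T0 p (r' + 1) (Sum.inr a) (Sum.inr k) * Smat p r' (Sum.inr k) (Sum.inl b))
          = (P21 p r' * ((p : ℚ) + 1))⁻¹ *
            ((∑ x : ZMod (p ^ r'), BBz p r' (zk p r' a) x)
              * SlrZ p r' (zk p (r' + 1) b.1)) := by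
        have hterm : ∀ k : Fin (p ^ r'),
            T0 p (r' + 1) (Sum.inr a) (Sum.inr k) * Smat p r' (Sum.inr k) (Sum.inl b)
            = (fun x : Fin (p ^ r') => (P21 p r' * ((p : ℚ) + 1))⁻¹ *
                (BBz p r' (zk p r' a) (zk p r' x) * SlrZ p r' (zk p (r' + 1) b.1))) k := by
          intro k
          show Bmat p (r' + 1) a k * _ = _
          rw [hBmat r' a k, Smat]
          ring
        rw [Finset.sum_congr rfl (fun k _ => hterm k),
          sum_fin_zmod r' (fun x => (P21 p r' * ((p : ℚ) + 1))⁻¹ *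
            (BBz p r' (zk p r' a) x * SlrZ p r' (zk p (r' + 1) b.1))),
          ← Finset.mul_sum, ← Finset.sum_mul]
      rw [h1, h2, Matrix.one_apply, if_neg (by simp)]
      have hrw : SlrZ p r' (zk p (r' + 1) b.1)
          = -C1 p r' + ((p : ℚ) - 1) * (nuZ p (zk p (r' + 1) b.1) : ℚ) := rfl
      rw [hrw] at *
      linear_combination (P21 p r' * ((p : ℚ) + 1))⁻¹ * hcore
    | inr b =>
      have hcore := core_rr (p := p) r' (zk p r' a) (zk p r' b)
      have h1 : (∑ k : {i : Fin (p ^ (r' + 1)) // (i : ℕ) ≠ 0},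
            T0 p (r' + 1) (Sum.inr a) (Sum.inl k) * Smat p r' (Sum.inl k) (Sum.inr b))
          = (P21 p r' * ((p : ℚ) + 1))⁻¹ *
            ((∑ x : ZMod (p ^ (r' + 1)), SlrZ p r' x) - SlrZ p r' 0) := by
        have hterm : ∀ k : {i : Fin (p ^ (r' + 1)) // (i : ℕ) ≠ 0},
            T0 p (r' + 1) (Sum.inr a) (Sum.inl k) * Smat p r' (Sum.inl k) (Sum.inr b)
            = (fun k : Fin (p ^ (r' + 1)) => (P21 p r' * ((p : ℚ) + 1))⁻¹ *
                SlrZ p r' (zk p (r' + 1) k)) k.1 := by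
          intro k
          show (1 : ℚ) * _ = _
          rw [Smat]
          ring
        rw [Finset.sum_congr rfl (fun k _ => hterm k),
          sum_subtype_ne (r' + 1) (fun k : Fin (p ^ (r' + 1)) => (P21 p r' * ((p : ℚ) + 1))⁻¹ *
            SlrZ p r' (zk p (r' + 1) k)),
          sum_fin_zmod (r' + 1) (fun x => (P21 p r' * ((p : ℚ) + 1))⁻¹ * SlrZ p r' x),
          zk_zero, ← Finset.mul_sum]
        ring
      have h2 : (∑ k : Fin (p ^ r'),
            T0 p (r' + 1) (Sum.inr a) (Sum.inr k) * Smat p r' (Sum.inr k) (Sum.inr b))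
          = (P21 p r' * ((p : ℚ) + 1))⁻¹ *
            (∑ x : ZMod (p ^ r'), BBz p r' (zk p r' a) x * SrrZ p r' x (zk p r' b)) := by
        have hterm : ∀ k : Fin (p ^ r'),
            T0 p (r' + 1) (Sum.inr a) (Sum.inr k) * Smat p r' (Sum.inr k) (Sum.inr b)
            = (fun x : Fin (p ^ r') => (P21 p r' * ((p : ℚ) + 1))⁻¹ *
                (BBz p r' (zk p r' a) (zk p r' x) * SrrZ p r' (zk p r' x) (zk p r' b))) k := by
          intro k
          show Bmat p (r' + 1) a k * _ = _
          rw [hBmat r' a k, Smat]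
          ring
        rw [Finset.sum_congr rfl (fun k _ => hterm k),
          sum_fin_zmod r' (fun x => (P21 p r' * ((p : ℚ) + 1))⁻¹ *
            (BBz p r' (zk p r' a) x * SrrZ p r' x (zk p r' b))),
          Finset.mul_sum]
      rw [h1, h2, Matrix.one_apply]
      have heq : (Sum.inr a = (Sum.inr b : {i : Fin (p ^ (r' + 1)) // (i : ℕ) ≠ 0} ⊕ _))
          ↔ zk p r' a = zk p r' b := by
        constructor
        · intro h; rw [Sum.inr.injEq] at h; rw [h]
        · intro h; rw [Sum.inr.injEq]; exact zk_inj r' h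
      rcases eq_or_ne (zk p r' a) (zk p r' b) with hz | hz
      · rw [if_pos (heq.mpr hz)]
        rw [if_pos hz] at hcore
        linear_combination (P21 p r' * ((p : ℚ) + 1))⁻¹ * hcore + hscale
      · rw [if_neg (fun h => hz (heq.mp h))]
        rw [if_neg hz] at hcore
        linear_combination (P21 p r' * ((p : ℚ) + 1))⁻¹ * hcore

end Trans


/-- For a prime `p` and `r ≥ 1`, `T₀` is invertible over `ℚ` and its
inverse has the entries described in Theorem "Entries of Inv Int Matrix". -/
theorem stmt15 (p r : ℕ) (hp : p.Prime) (hr : 1 ≤ r) :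
    IsUnit (T0 p r) ∧
    (∀ i j : {i : Fin (p ^ r) // (i : ℕ) ≠ 0},
      (T0 p r)⁻¹ (Sum.inl i) (Sum.inl j) =
        if i = j then
          -2 * (p : ℚ) ^ (1 - 2 * (r : ℤ)) * ((p : ℚ) * r - r + 1) / ((p : ℚ) + 1) +
            2 * (p : ℚ) ^ (1 - 2 * (r : ℤ)) * ((p : ℚ) - 1) *
              (padicValNat p (i.1 : ℕ) : ℚ) / ((p : ℚ) + 1)
        else
          -(p : ℚ) ^ (1 - 2 * (r : ℤ)) * ((p : ℚ) * r - r + 1) / ((p : ℚ) + 1) -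
            ((p : ℚ) ^ (1 - 2 * (r : ℤ)) * ((p : ℚ) - 1) / ((p : ℚ) + 1)) *
              ((padicValInt p ((i.1 : ℤ) - (j.1 : ℤ)) : ℚ) -
                (padicValNat p (i.1 : ℕ) : ℚ) - (padicValNat p (j.1 : ℕ) : ℚ))) ∧
    (∀ (i : {i : Fin (p ^ r) // (i : ℕ) ≠ 0}) (j : Fin (p ^ (r - 1))),
      (T0 p r)⁻¹ (Sum.inl i) (Sum.inr j) =
        -(p : ℚ) ^ (1 - 2 * (r : ℤ)) * ((p : ℚ) * r - r + 1) / ((p : ℚ) + 1) +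
          (p : ℚ) ^ (1 - 2 * (r : ℤ)) * ((p : ℚ) - 1) *
            (padicValNat p (i.1 : ℕ) : ℚ) / ((p : ℚ) + 1)) ∧
    (∀ (i : Fin (p ^ (r - 1))) (j : {i : Fin (p ^ r) // (i : ℕ) ≠ 0}),
      (T0 p r)⁻¹ (Sum.inr i) (Sum.inl j) =
        -(p : ℚ) ^ (1 - 2 * (r : ℤ)) * ((p : ℚ) * r - r + 1) / ((p : ℚ) + 1) +
          (p : ℚ) ^ (1 - 2 * (r : ℤ)) * ((p : ℚ) - 1) *
            (padicValNat p (j.1 : ℕ) : ℚ) / ((p : ℚ) + 1)) ∧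
    (∀ i j : Fin (p ^ (r - 1)),
      (T0 p r)⁻¹ (Sum.inr i) (Sum.inr j) =
        if i = j then
          -2 * (p : ℚ) ^ (1 - 2 * (r : ℤ)) * ((p : ℚ) * r - r + 1) / ((p : ℚ) + 1)
        else
          -(p : ℚ) ^ (1 - 2 * (r : ℤ)) * ((p : ℚ) * r + p - r) / ((p : ℚ) + 1) -
            (p : ℚ) ^ (1 - 2 * (r : ℤ)) * ((p : ℚ) - 1) *
              (padicValInt p ((i : ℤ) - (j : ℤ)) : ℚ) / ((p : ℚ) + 1)) := by
  haveI : Fact p.Prime := ⟨hp⟩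
  obtain ⟨r', rfl⟩ : ∃ r', r = r' + 1 := ⟨r - 1, by omega⟩
  have hmul := main_inv p r'
  have hinv := Matrix.inv_eq_right_inv hmul
  have hP21 : (P21 p r' : ℚ) ≠ 0 := by
    have := P21_pos p r'
    have hp1 : (0 : ℚ) < (p : ℚ) + 1 := by positivity
    intro h
    rw [h] at this
    simp at this
  have hp1 : ((p : ℚ) + 1) ≠ 0 := by positivity
  have hzp : (p : ℚ) ^ ((1 : ℤ) - 2 * (((r' + 1 : ℕ) : ℤ))) = (P21 p r')⁻¹ := by
    have h1 : (1 : ℤ) - 2 * (((r' + 1 : ℕ) : ℤ)) = -((2 * r' + 1 : ℕ) : ℤ) := by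
      push_cast
      ring
    rw [h1, zpow_neg, zpow_natCast, P21]
  refine ⟨?_, ?_, ?_, ?_, ?_⟩
  · exact (Matrix.isUnit_iff_isUnit_det _).mpr (Matrix.isUnit_det_of_right_inverse hmul)
  · intro i j
    refine (congrFun (congrFun hinv (Sum.inl i)) (Sum.inl j)).trans ?_
    show (P21 p r' * ((p : ℚ) + 1))⁻¹
        * SllZ p r' (zk p (r' + 1) i.1) (zk p (r' + 1) j.1) = _
    rcases eq_or_ne i j with rfl | hij
    · rw [SllZ, if_pos rfl, if_pos rfl, nuZ_zk, hzp]
      push_cast [C1]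
      first
      | (field_simp; ring)
      | field_simp
    · have hzij : zk p (r' + 1) i.1 ≠ zk p (r' + 1) j.1 := by
        intro h
        exact hij (Subtype.ext (zk_inj (r' + 1) h))
      have hij' : i.1 ≠ j.1 := fun h => hij (Subtype.ext h)
      rw [SllZ, if_neg hzij, if_neg hij, nuZ_zk, nuZ_zk, nuZ_zk_sub (r' + 1) i.1 j.1 hij', hzp]
      push_cast [C1]
      first
      | (field_simp; ring)
      | field_simp
  · intro i j
    refine (congrFun (congrFun hinv (Sum.inl i)) (Sum.inr j)).trans ?_
    show (P21 p r' * ((p : ℚ) + 1))⁻¹ * SlrZ p r' (zk p (r' + 1) i.1) = _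
    rw [SlrZ, nuZ_zk, hzp]
    push_cast [C1]
    first
    | (field_simp; ring)
    | field_simp
  · intro i j
    refine (congrFun (congrFun hinv (Sum.inr i)) (Sum.inl j)).trans ?_
    show (P21 p r' * ((p : ℚ) + 1))⁻¹ * SlrZ p r' (zk p (r' + 1) j.1) = _
    rw [SlrZ, nuZ_zk, hzp]
    push_cast [C1]
    first
    | (field_simp; ring)
    | field_simp
  · intro i j
    refine (congrFun (congrFun hinv (Sum.inr i)) (Sum.inr j)).trans ?_
    show (P21 p r' * ((p : ℚ) + 1))⁻¹ * SrrZ p r' (zk p r' i) (zk p r' j) = _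
    rcases eq_or_ne i j with rfl | hij
    · rw [SrrZ, if_pos rfl, if_pos rfl, hzp]
      push_cast [C1]
      first
      | (field_simp; ring)
      | field_simp
    · have hzij : zk p r' i ≠ zk p r' j := fun h => hij (zk_inj r' h)
      rw [SrrZ, if_neg hzij, if_neg hij, nuZ_zk_sub r' i j hij, hzp]
      push_cast [C1, C3]
      first
      | (field_simp; ring)
      | field_simp
end
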